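/- arXiv:2110.04601 — 5 statements merged into one kernel-verified Lean document; each statement's English description precedes it below -/
import Mathlib

section
/- Let (𝒢, Γ) be a finite graph of groups and let e be an edge of Γ which is not a loop and for which one of the two edge monomorphisms ∂_i : 𝒢(e) → 𝒢(d_i(e)) is an isomorphism. Let (𝒢', Γ') be the graph of groups obtained by collapsing e (removing e and identifying its endpoints, with the new vertex group being the endpoint group into which ∂ is not an isomorphism). Then the fundamental group of (𝒢', Γ') is isomorphic to the fundamental group of (𝒢, Γ). -/
section GoG

/-- A graph of groups over the oriented multigraph `(V, E, d0, d1)`, with vertex groups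
`GV v` and edge groups `GE e`: the data of the two edge morphisms `∂₀, ∂₁`. -/
structure GraphOfGroups (V E : Type) (d0 d1 : E → V)
    (GV : V → Type) (GE : E → Type) [∀ v, Group (GV v)] [∀ e, Group (GE e)] where
  bd0 : ∀ e, GE e →* GV (d0 e)
  bd1 : ∀ e, GE e →* GV (d1 e)

variable {V E : Type} {d0 d1 : E → V} {GV : V → Type} {GE : E → Type}
  [∀ v, Group (GV v)] [∀ e, Group (GE e)]

/-- A graph of groups is *injective* (a genuine graph of groups) if both edge morphisms of
every edge are injective. -/
def GraphOfGroups.Injective (GG : GraphOfGroups V E d0 d1 GV GE) : Prop :=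
  ∀ e, Function.Injective (GG.bd0 e) ∧ Function.Injective (GG.bd1 e)

/-- Generators for the fundamental group of a graph of groups: the elements of the vertex
groups together with one stable letter for each edge. -/
abbrev GoGGen (V E : Type) (GV : V → Type) : Type := (Σ v : V, GV v) ⊕ E

/-- The defining relations of the fundamental group of a graph of groups with respect to a
(spanning) subtree `Tr`: multiplication inside each vertex group, the Bass–Serre relations
`e ∂₁(x) e⁻¹ = ∂₀(x)`, and `e = 1` for each edge `e` of `Tr`. -/
def GoGRels (GG : GraphOfGroups V E d0 d1 GV GE) (Tr : Set E) :
    Set (FreeGroup (GoGGen V E GV)) :=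
  { w | (∃ (v : V) (a b : GV v),
          w = FreeGroup.of (Sum.inl ⟨v, a⟩) * FreeGroup.of (Sum.inl ⟨v, b⟩) *
            (FreeGroup.of (Sum.inl ⟨v, a * b⟩))⁻¹) ∨
        (∃ (e : E) (x : GE e),
          w = FreeGroup.of (Sum.inr e) * FreeGroup.of (Sum.inl ⟨d1 e, GG.bd1 e x⟩) *
            (FreeGroup.of (Sum.inr e))⁻¹ * (FreeGroup.of (Sum.inl ⟨d0 e, GG.bd0 e x⟩))⁻¹) ∨
        (∃ e ∈ Tr, w = FreeGroup.of (Sum.inr e)) }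

/-- The fundamental group of a graph of groups with respect to a (spanning) subtree `Tr`. -/
abbrev FundGroup (GG : GraphOfGroups V E d0 d1 GV GE) (Tr : Set E) : Type :=
  PresentedGroup (GoGRels GG Tr)

/-- The image of the vertex group `GV v` in the fundamental group. -/
def vertexSubgroup (GG : GraphOfGroups V E d0 d1 GV GE) (Tr : Set E) (v : V) :
    Subgroup (FundGroup GG Tr) :=
  Subgroup.closure (Set.range fun a : GV v =>
    (PresentedGroup.of (rels := GoGRels GG Tr) (Sum.inl ⟨v, a⟩)))

/-- The image of the edge group `GE e` in the fundamental group (via `∂₀`). -/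
def edgeSubgroup (GG : GraphOfGroups V E d0 d1 GV GE) (Tr : Set E) (e : E) :
    Subgroup (FundGroup GG Tr) :=
  Subgroup.closure (Set.range fun x : GE e =>
    (PresentedGroup.of (rels := GoGRels GG Tr) (Sum.inl ⟨d0 e, GG.bd0 e x⟩)))

/-- The stable letter of the edge `e` in the fundamental group. -/
def stableLetter (GG : GraphOfGroups V E d0 d1 GV GE) (Tr : Set E) (e : E) :
    FundGroup GG Tr :=
  PresentedGroup.of (rels := GoGRels GG Tr) (Sum.inr e)

/-- Reachability in the subgraph of `(V, E, d0, d1)` with edge set `Tr`. -/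
def GraphReach (d0 d1 : E → V) (Tr : Set E) : V → V → Prop :=
  Relation.ReflTransGen (fun a b => ∃ e ∈ Tr, (d0 e = a ∧ d1 e = b) ∨ (d0 e = b ∧ d1 e = a))

/-- `Tr` is a spanning tree of the finite connected graph `(V, E, d0, d1)`: it connects any
two vertices and has exactly `|V| - 1` edges. -/
def IsSpanningTree (d0 d1 : E → V) (Tr : Set E) : Prop :=
  (∀ a b : V, GraphReach d0 d1 Tr a b) ∧ Nat.card Tr + 1 = Nat.card V

/-- A graph of groups is reduced if for every edge which is not a loop, neither edge morphism
is an isomorphism. -/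
def GraphOfGroups.Reduced (GG : GraphOfGroups V E d0 d1 GV GE) : Prop :=
  ∀ e : E, d0 e ≠ d1 e →
    ¬ Function.Bijective (GG.bd0 e) ∧ ¬ Function.Bijective (GG.bd1 e)

end GoG
section Collapse

variable {V E : Type} [DecidableEq V] {d0 d1 : E → V} {GV : V → Type} {GE : E → Type}
  [∀ v, Group (GV v)] [∀ e, Group (GE e)]

/-- Transport of vertex groups along an equality of vertices. -/
def castHom (GV : V → Type) [∀ v, Group (GV v)] {w z : V} (h : w = z) : GV w →* GV z := by
  subst h; exact MonoidHom.id _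

/-- The map on vertices replacing the vertex `f` by the vertex `t`. -/
def cmapV (f t : V) : V → V := fun w => if w = f then t else w

lemma cmapV_ne {f t : V} (h : t ≠ f) (w : V) : cmapV f t w ≠ f := by
  unfold cmapV; split
  · exact h
  · assumption

variable (GG : GraphOfGroups V E d0 d1 GV GE) (e₀ : E)

/-- The induced morphism on vertex groups for the collapse of `e₀` (case `∂₁` iso):
the group of the deleted vertex `d1 e₀` is transported to `GV (d0 e₀)` via `∂₀ ∘ ∂₁⁻¹`. -/
noncomputable def cmapHom1 (hiso : Function.Bijective (GG.bd1 e₀)) (w : V) :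
    GV w →* GV (cmapV (d1 e₀) (d0 e₀) w) := by
  unfold cmapV
  by_cases h : w = d1 e₀
  · rw [if_pos h]
    exact (GG.bd0 e₀).comp
      ((MulEquiv.ofBijective (GG.bd1 e₀) hiso).symm.toMonoidHom.comp (castHom GV h))
  · rw [if_neg h]
    exact MonoidHom.id _

/-- The graph of groups obtained from `GG` by collapsing the fictitious edge `e₀` whose
second edge morphism `∂₁` is an isomorphism: the vertex `d1 e₀` and the edge `e₀` are
removed, the new vertex carries the group `GV (d0 e₀)`, and edges previously attached
to `d1 e₀` are reattached to `d0 e₀` via `∂₀ ∘ ∂₁⁻¹`. -/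
noncomputable def collapse1 (hnl : d0 e₀ ≠ d1 e₀) (hiso : Function.Bijective (GG.bd1 e₀)) :
    GraphOfGroups {v : V // v ≠ d1 e₀} {e : E // e ≠ e₀}
      (fun e => ⟨cmapV (d1 e₀) (d0 e₀) (d0 e.1), cmapV_ne hnl _⟩)
      (fun e => ⟨cmapV (d1 e₀) (d0 e₀) (d1 e.1), cmapV_ne hnl _⟩)
      (fun v => GV v.1) (fun e => GE e.1) where
  bd0 := fun e => (cmapHom1 GG e₀ hiso (d0 e.1)).comp (GG.bd0 e.1)
  bd1 := fun e => (cmapHom1 GG e₀ hiso (d1 e.1)).comp (GG.bd1 e.1)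

/-- The induced morphism on vertex groups for the collapse of `e₀` (case `∂₀` iso). -/
noncomputable def cmapHom0 (hiso : Function.Bijective (GG.bd0 e₀)) (w : V) :
    GV w →* GV (cmapV (d0 e₀) (d1 e₀) w) := by
  unfold cmapV
  by_cases h : w = d0 e₀
  · rw [if_pos h]
    exact (GG.bd1 e₀).comp
      ((MulEquiv.ofBijective (GG.bd0 e₀) hiso).symm.toMonoidHom.comp (castHom GV h))
  · rw [if_neg h]
    exact MonoidHom.id _

/-- The graph of groups obtained from `GG` by collapsing the fictitious edge `e₀` whose
first edge morphism `∂₀` is an isomorphism: the vertex `d0 e₀` and the edge `e₀` are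
removed and the new vertex carries the group `GV (d1 e₀)`. -/
noncomputable def collapse0 (hnl : d0 e₀ ≠ d1 e₀) (hiso : Function.Bijective (GG.bd0 e₀)) :
    GraphOfGroups {v : V // v ≠ d0 e₀} {e : E // e ≠ e₀}
      (fun e => ⟨cmapV (d0 e₀) (d1 e₀) (d0 e.1), cmapV_ne (Ne.symm hnl) _⟩)
      (fun e => ⟨cmapV (d0 e₀) (d1 e₀) (d1 e.1), cmapV_ne (Ne.symm hnl) _⟩)
      (fun v => GV v.1) (fun e => GE e.1) where
  bd0 := fun e => (cmapHom0 GG e₀ hiso (d0 e.1)).comp (GG.bd0 e.1)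
  bd1 := fun e => (cmapHom0 GG e₀ hiso (d1 e.1)).comp (GG.bd1 e.1)

end Collapse
set_option linter.unusedSectionVars false

-- test helpers
section Helpers
variable {V E : Type} {d0 d1 : E → V} {GV : V → Type} {GE : E → Type}
  [∀ v, Group (GV v)] [∀ e, Group (GE e)]
  (GG : GraphOfGroups V E d0 d1 GV GE) (Tr : Set E)

lemma FG.rel_one {r} (hr : r ∈ GoGRels GG Tr) :
    PresentedGroup.mk (GoGRels GG Tr) r = 1 :=
  (QuotientGroup.eq_one_iff r).mpr (Subgroup.subset_normalClosure hr)

lemma FG.mul (v : V) (a b : GV v) :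
    (PresentedGroup.of (rels := GoGRels GG Tr) (Sum.inl ⟨v, a⟩)) *
    PresentedGroup.of (Sum.inl ⟨v, b⟩) = PresentedGroup.of (Sum.inl ⟨v, a * b⟩) := by
  have := FG.rel_one GG Tr (r := FreeGroup.of (Sum.inl ⟨v, a⟩) * FreeGroup.of (Sum.inl ⟨v, b⟩) *
            (FreeGroup.of (Sum.inl ⟨v, a * b⟩))⁻¹) (Or.inl ⟨v, a, b, rfl⟩)
  simp only [map_mul, map_inv] at this
  rw [mul_inv_eq_one] at this
  exact this

lemma FG.tree {e : E} (he : e ∈ Tr) :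
    (PresentedGroup.of (rels := GoGRels GG Tr) (Sum.inr e)) = 1 :=
  FG.rel_one GG Tr (Or.inr (Or.inr ⟨e, he, rfl⟩))

lemma FG.bs (e : E) (x : GE e) :
    (PresentedGroup.of (rels := GoGRels GG Tr) (Sum.inr e)) *
      PresentedGroup.of (Sum.inl ⟨d1 e, GG.bd1 e x⟩) *
      (PresentedGroup.of (rels := GoGRels GG Tr) (Sum.inr e))⁻¹ =
      PresentedGroup.of (Sum.inl ⟨d0 e, GG.bd0 e x⟩) := by
  have := FG.rel_one GG Tr (r := FreeGroup.of (Sum.inr e) * FreeGroup.of (Sum.inl ⟨d1 e, GG.bd1 e x⟩) *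
            (FreeGroup.of (Sum.inr e))⁻¹ * (FreeGroup.of (Sum.inl ⟨d0 e, GG.bd0 e x⟩))⁻¹)
    (Or.inr (Or.inl ⟨e, x, rfl⟩))
  simp only [map_mul, map_inv] at this
  rw [mul_inv_eq_one] at this
  exact this

lemma FG.cast {v w : V} (h : v = w) (a : GV v) :
    (PresentedGroup.of (rels := GoGRels GG Tr) (Sum.inl ⟨v, a⟩)) =
    PresentedGroup.of (Sum.inl ⟨w, castHom GV h a⟩) := by
  subst h; rfl

lemma FG.tree_vert {e : E} (he : e ∈ Tr) (x : GE e) :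
    (PresentedGroup.of (rels := GoGRels GG Tr) (Sum.inl ⟨d1 e, GG.bd1 e x⟩)) =
    PresentedGroup.of (Sum.inl ⟨d0 e, GG.bd0 e x⟩) := by
  rw [← FG.bs GG Tr e x, FG.tree GG Tr he]
  simp

end Helpers
section Char
variable {V E : Type} [DecidableEq V] {d0 d1 : E → V} {GV : V → Type} {GE : E → Type}
  [∀ v, Group (GV v)] [∀ e, Group (GE e)]
  (GG : GraphOfGroups V E d0 d1 GV GE) (e₀ : E)

lemma sigma_cast_aux {w x y : V} (h : x = y) (f : GV w →* GV x) (a : GV w) :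
    (⟨y, (cast (show (GV w →* GV x) = (GV w →* GV y) by rw [h]) f) a⟩ : Σ v, GV v) =
    ⟨x, f a⟩ := by subst h; rfl

lemma cmapHom1_pos (hiso : Function.Bijective (GG.bd1 e₀)) (a : GV (d1 e₀)) :
    (⟨cmapV (d1 e₀) (d0 e₀) (d1 e₀), cmapHom1 GG e₀ hiso (d1 e₀) a⟩ : Σ v, GV v) =
    ⟨d0 e₀, GG.bd0 e₀ ((MulEquiv.ofBijective (GG.bd1 e₀) hiso).symm a)⟩ := by
  unfold cmapHom1
  rw [dif_pos rfl]
  simp only [eq_mpr_eq_cast]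
  exact sigma_cast_aux (show d0 e₀ = cmapV (d1 e₀) (d0 e₀) (d1 e₀) from (if_pos rfl).symm) _ a

lemma cmapHom1_neg (hiso : Function.Bijective (GG.bd1 e₀)) {w : V} (h : w ≠ d1 e₀) (a : GV w) :
    (⟨cmapV (d1 e₀) (d0 e₀) w, cmapHom1 GG e₀ hiso w a⟩ : Σ v, GV v) = ⟨w, a⟩ := by
  unfold cmapHom1
  rw [dif_neg h]
  simp only [eq_mpr_eq_cast]
  exact sigma_cast_aux (show w = cmapV (d1 e₀) (d0 e₀) w from (if_neg h).symm) (MonoidHom.id _) a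

lemma cmapHom0_pos (hiso : Function.Bijective (GG.bd0 e₀)) (a : GV (d0 e₀)) :
    (⟨cmapV (d0 e₀) (d1 e₀) (d0 e₀), cmapHom0 GG e₀ hiso (d0 e₀) a⟩ : Σ v, GV v) =
    ⟨d1 e₀, GG.bd1 e₀ ((MulEquiv.ofBijective (GG.bd0 e₀) hiso).symm a)⟩ := by
  unfold cmapHom0
  rw [dif_pos rfl]
  simp only [eq_mpr_eq_cast]
  exact sigma_cast_aux (show d1 e₀ = cmapV (d0 e₀) (d1 e₀) (d0 e₀) from (if_pos rfl).symm) _ a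

lemma cmapHom0_neg (hiso : Function.Bijective (GG.bd0 e₀)) {w : V} (h : w ≠ d0 e₀) (a : GV w) :
    (⟨cmapV (d0 e₀) (d1 e₀) w, cmapHom0 GG e₀ hiso w a⟩ : Σ v, GV v) = ⟨w, a⟩ := by
  unfold cmapHom0
  rw [dif_neg h]
  simp only [eq_mpr_eq_cast]
  exact sigma_cast_aux (show w = cmapV (d0 e₀) (d1 e₀) w from (if_neg h).symm) (MonoidHom.id _) a
end Char
section Case1
variable {V E : Type} [DecidableEq V] [DecidableEq E] {d0 d1 : E → V} {GV : V → Type} {GE : E → Type}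
  [∀ v, Group (GV v)] [∀ e, Group (GE e)]
  (GG : GraphOfGroups V E d0 d1 GV GE) (e₀ : E) (hnl : d0 e₀ ≠ d1 e₀)
  (hiso : Function.Bijective (GG.bd1 e₀)) (Tr : Set E)

lemma subtype_sigma {p : V → Prop} {x y : {v // p v}} {a : GV x.1} {b : GV y.1}
    (h : (⟨x.1, a⟩ : Σ v, GV v) = ⟨y.1, b⟩) :
    (⟨x, a⟩ : Σ v : {v // p v}, GV v.1) = ⟨y, b⟩ := by
  obtain ⟨h1, h2⟩ := Sigma.mk.inj_iff.mp h
  have hxy : x = y := Subtype.ext h1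
  subst hxy
  rw [eq_of_heq h2]

/-- Key lemma in the original fundamental group: the collapsed generator equals the
original generator. -/
lemma key2_1 (he₀ : e₀ ∈ Tr) (w : V) (a : GV w) :
    PresentedGroup.of (rels := GoGRels GG Tr)
      (Sum.inl (⟨cmapV (d1 e₀) (d0 e₀) w, cmapHom1 GG e₀ hiso w a⟩ : Σ v, GV v)) =
    PresentedGroup.of (Sum.inl ⟨w, a⟩) := by
  by_cases h : w = d1 e₀
  · subst h
    rw [cmapHom1_pos GG e₀ hiso a]
    set y := (MulEquiv.ofBijective (GG.bd1 e₀) hiso).symm a with hy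
    have hby : GG.bd1 e₀ y = a := by
      show (MulEquiv.ofBijective (GG.bd1 e₀) hiso) y = a
      simp [hy]
    rw [← hby]
    exact (FG.tree_vert GG Tr he₀ y).symm
  · rw [cmapHom1_neg GG e₀ hiso h a]

/-- generator map for φ : FundGroup GG Tr → FundGroup GG' Tr'. -/
noncomputable def phiGen1 :
    GoGGen V E GV → FundGroup (collapse1 GG e₀ hnl hiso) {e : {e : E // e ≠ e₀} | e.1 ∈ Tr} :=
  fun x => match x with
  | Sum.inl s => PresentedGroup.of
      (Sum.inl ⟨⟨cmapV (d1 e₀) (d0 e₀) s.1, cmapV_ne hnl s.1⟩, cmapHom1 GG e₀ hiso s.1 s.2⟩)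
  | Sum.inr e => if h : e = e₀ then 1 else PresentedGroup.of (Sum.inr ⟨e, h⟩)

noncomputable def psiGen1 :
    GoGGen {v : V // v ≠ d1 e₀} {e : E // e ≠ e₀} (fun v => GV v.1) → FundGroup GG Tr :=
  fun x => match x with
  | Sum.inl s => PresentedGroup.of (Sum.inl ⟨s.1.1, s.2⟩)
  | Sum.inr e => PresentedGroup.of (Sum.inr e.1)

lemma phiGen1_rels : ∀ r ∈ GoGRels GG Tr,
    FreeGroup.lift (phiGen1 GG e₀ hnl hiso Tr) r = 1 := by
  rintro r (⟨v, a, b, rfl⟩ | ⟨e, x, rfl⟩ | ⟨e, he, rfl⟩)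
  · simp only [map_mul, map_inv, FreeGroup.lift_apply_of, phiGen1, mul_inv_eq_one]
    rw [← FG.mul]
  · simp only [map_mul, map_inv, FreeGroup.lift_apply_of, phiGen1]
    by_cases h : e = e₀
    · subst e
      rw [dif_pos rfl]
      simp only [one_mul, inv_one, mul_one, mul_inv_eq_one]
      have h1 : (⟨⟨cmapV (d1 e₀) (d0 e₀) (d1 e₀), cmapV_ne hnl _⟩,
            cmapHom1 GG e₀ hiso (d1 e₀) (GG.bd1 e₀ x)⟩ :
            Σ v : {v : V // v ≠ d1 e₀}, GV v.1) = ⟨⟨d0 e₀, hnl⟩, GG.bd0 e₀ x⟩ := by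
        apply subtype_sigma
        rw [cmapHom1_pos GG e₀ hiso]
        have hx : (MulEquiv.ofBijective (GG.bd1 e₀) hiso).symm ((GG.bd1 e₀) x) = x :=
          (MulEquiv.ofBijective (GG.bd1 e₀) hiso).symm_apply_apply x
        rw [hx]
      have h0 : (⟨⟨cmapV (d1 e₀) (d0 e₀) (d0 e₀), cmapV_ne hnl _⟩,
            cmapHom1 GG e₀ hiso (d0 e₀) (GG.bd0 e₀ x)⟩ :
            Σ v : {v : V // v ≠ d1 e₀}, GV v.1) = ⟨⟨d0 e₀, hnl⟩, GG.bd0 e₀ x⟩ :=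
        subtype_sigma (cmapHom1_neg GG e₀ hiso hnl _)
      rw [h1, h0]
    · rw [dif_neg h]
      rw [mul_inv_eq_one]
      exact FG.bs (collapse1 GG e₀ hnl hiso) {e : {e : E // e ≠ e₀} | e.1 ∈ Tr} ⟨e, h⟩ x
  · simp only [FreeGroup.lift_apply_of, phiGen1]
    by_cases h : e = e₀
    · rw [dif_pos h]
    · rw [dif_neg h]
      exact FG.tree _ _ he

lemma psiGen1_rels (he₀ : e₀ ∈ Tr) : ∀ r ∈ GoGRels (collapse1 GG e₀ hnl hiso)
      {e : {e : E // e ≠ e₀} | e.1 ∈ Tr},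
    FreeGroup.lift (psiGen1 GG e₀ Tr) r = 1 := by
  rintro r (⟨v, a, b, rfl⟩ | ⟨e, x, rfl⟩ | ⟨e, he, rfl⟩)
  · simp only [map_mul, map_inv, FreeGroup.lift_apply_of, psiGen1, mul_inv_eq_one]
    exact FG.mul GG Tr v.1 a b
  · simp only [map_mul, map_inv, FreeGroup.lift_apply_of, psiGen1, mul_inv_eq_one]
    show PresentedGroup.of (Sum.inr e.1) *
        PresentedGroup.of (Sum.inl ⟨cmapV (d1 e₀) (d0 e₀) (d1 e.1),
          cmapHom1 GG e₀ hiso (d1 e.1) (GG.bd1 e.1 x)⟩) *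
        (PresentedGroup.of (rels := GoGRels GG Tr) (Sum.inr e.1))⁻¹ =
      PresentedGroup.of (Sum.inl ⟨cmapV (d1 e₀) (d0 e₀) (d0 e.1),
          cmapHom1 GG e₀ hiso (d0 e.1) (GG.bd0 e.1 x)⟩)
    rw [key2_1 GG e₀ hiso Tr he₀, key2_1 GG e₀ hiso Tr he₀]
    exact FG.bs GG Tr e.1 x
  · simp only [FreeGroup.lift_apply_of, psiGen1]
    exact FG.tree _ _ he

end Case1
section Case1b
variable {V E : Type} [DecidableEq V] [DecidableEq E] {d0 d1 : E → V} {GV : V → Type} {GE : E → Type}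
  [∀ v, Group (GV v)] [∀ e, Group (GE e)]
  (GG : GraphOfGroups V E d0 d1 GV GE) (e₀ : E) (hnl : d0 e₀ ≠ d1 e₀)
  (hiso : Function.Bijective (GG.bd1 e₀)) (Tr : Set E)

noncomputable def case1_equiv (he₀ : e₀ ∈ Tr) :
    FundGroup GG Tr ≃* FundGroup (collapse1 GG e₀ hnl hiso)
      {e : {e : E // e ≠ e₀} | e.1 ∈ Tr} := by
  set φ := PresentedGroup.toGroup (phiGen1_rels GG e₀ hnl hiso Tr) with hφ
  set ψ := PresentedGroup.toGroup (psiGen1_rels GG e₀ hnl hiso Tr he₀) with hψ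
  have hleft : ψ.comp φ = MonoidHom.id _ := by
    apply PresentedGroup.ext
    rintro (⟨v, a⟩ | e)
    · rw [MonoidHom.comp_apply]
      rw [hφ, PresentedGroup.toGroup.of, hψ]
      show PresentedGroup.toGroup (psiGen1_rels GG e₀ hnl hiso Tr he₀)
        (PresentedGroup.of (Sum.inl ⟨⟨cmapV (d1 e₀) (d0 e₀) v, cmapV_ne hnl v⟩,
          cmapHom1 GG e₀ hiso v a⟩)) = PresentedGroup.of (Sum.inl ⟨v, a⟩)
      rw [PresentedGroup.toGroup.of]
      exact key2_1 GG e₀ hiso Tr he₀ v a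
    · rw [MonoidHom.comp_apply]
      rw [hφ, PresentedGroup.toGroup.of]
      by_cases h : e = e₀
      · subst e
        show ψ (dite _ _ _) = _
        rw [dif_pos rfl, map_one]
        exact (FG.tree GG Tr he₀).symm
      · show ψ (dite _ _ _) = _
        rw [dif_neg h, hψ, PresentedGroup.toGroup.of]
        rfl
  have hright : φ.comp ψ = MonoidHom.id _ := by
    apply PresentedGroup.ext
    rintro (⟨v, a⟩ | e)
    · rw [MonoidHom.comp_apply]
      rw [hψ, PresentedGroup.toGroup.of, hφ]
      show PresentedGroup.toGroup (phiGen1_rels GG e₀ hnl hiso Tr)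
        (PresentedGroup.of (Sum.inl ⟨v.1, a⟩)) =
        (MonoidHom.id _) (PresentedGroup.of (Sum.inl ⟨v, a⟩))
      rw [PresentedGroup.toGroup.of]
      show PresentedGroup.of (rels := GoGRels (collapse1 GG e₀ hnl hiso)
          {e : {e : E // e ≠ e₀} | e.1 ∈ Tr})
          (Sum.inl ⟨⟨cmapV (d1 e₀) (d0 e₀) v.1, cmapV_ne hnl v.1⟩,
          cmapHom1 GG e₀ hiso v.1 a⟩) =
        PresentedGroup.of (Sum.inl ⟨v, a⟩)
      rw [subtype_sigma (x := ⟨cmapV (d1 e₀) (d0 e₀) v.1, cmapV_ne hnl v.1⟩) (y := v)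
        (cmapHom1_neg GG e₀ hiso v.2 a)]
    · rw [MonoidHom.comp_apply]
      rw [hψ, PresentedGroup.toGroup.of, hφ]
      show PresentedGroup.toGroup (phiGen1_rels GG e₀ hnl hiso Tr)
        (PresentedGroup.of (Sum.inr e.1)) =
        (MonoidHom.id _) (PresentedGroup.of (Sum.inr e))
      rw [PresentedGroup.toGroup.of]
      show dite _ _ _ = _
      rw [dif_neg e.2]
      rfl
  exact
    { toFun := φ, invFun := ψ,
      left_inv := fun x => DFunLike.congr_fun hleft x,
      right_inv := fun x => DFunLike.congr_fun hright x,
      map_mul' := map_mul φ }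

end Case1b
section Case0
variable {V E : Type} [DecidableEq V] [DecidableEq E] {d0 d1 : E → V} {GV : V → Type} {GE : E → Type}
  [∀ v, Group (GV v)] [∀ e, Group (GE e)]
  (GG : GraphOfGroups V E d0 d1 GV GE) (e₀ : E) (hnl : d0 e₀ ≠ d1 e₀)
  (hiso : Function.Bijective (GG.bd0 e₀)) (Tr : Set E)

lemma key2_0 (he₀ : e₀ ∈ Tr) (w : V) (a : GV w) :
    PresentedGroup.of (rels := GoGRels GG Tr)
      (Sum.inl (⟨cmapV (d0 e₀) (d1 e₀) w, cmapHom0 GG e₀ hiso w a⟩ : Σ v, GV v)) =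
    PresentedGroup.of (Sum.inl ⟨w, a⟩) := by
  by_cases h : w = d0 e₀
  · subst h
    rw [cmapHom0_pos GG e₀ hiso a]
    set y := (MulEquiv.ofBijective (GG.bd0 e₀) hiso).symm a with hy
    have hby : GG.bd0 e₀ y = a := by
      show (MulEquiv.ofBijective (GG.bd0 e₀) hiso) y = a
      simp [hy]
    rw [← hby]
    exact FG.tree_vert GG Tr he₀ y
  · rw [cmapHom0_neg GG e₀ hiso h a]

noncomputable def phiGen0 :
    GoGGen V E GV → FundGroup (collapse0 GG e₀ hnl hiso) {e : {e : E // e ≠ e₀} | e.1 ∈ Tr} :=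
  fun x => match x with
  | Sum.inl s => PresentedGroup.of
      (Sum.inl ⟨⟨cmapV (d0 e₀) (d1 e₀) s.1, cmapV_ne (Ne.symm hnl) s.1⟩,
        cmapHom0 GG e₀ hiso s.1 s.2⟩)
  | Sum.inr e => if h : e = e₀ then 1 else PresentedGroup.of (Sum.inr ⟨e, h⟩)

noncomputable def psiGen0 :
    GoGGen {v : V // v ≠ d0 e₀} {e : E // e ≠ e₀} (fun v => GV v.1) → FundGroup GG Tr :=
  fun x => match x with
  | Sum.inl s => PresentedGroup.of (Sum.inl ⟨s.1.1, s.2⟩)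
  | Sum.inr e => PresentedGroup.of (Sum.inr e.1)

lemma phiGen0_rels : ∀ r ∈ GoGRels GG Tr,
    FreeGroup.lift (phiGen0 GG e₀ hnl hiso Tr) r = 1 := by
  rintro r (⟨v, a, b, rfl⟩ | ⟨e, x, rfl⟩ | ⟨e, he, rfl⟩)
  · simp only [map_mul, map_inv, FreeGroup.lift_apply_of, phiGen0, mul_inv_eq_one]
    rw [← FG.mul]
  · simp only [map_mul, map_inv, FreeGroup.lift_apply_of, phiGen0]
    by_cases h : e = e₀
    · subst e
      rw [dif_pos rfl]
      simp only [one_mul, inv_one, mul_one, mul_inv_eq_one]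
      have h1 : (⟨⟨cmapV (d0 e₀) (d1 e₀) (d1 e₀), cmapV_ne (Ne.symm hnl) _⟩,
            cmapHom0 GG e₀ hiso (d1 e₀) (GG.bd1 e₀ x)⟩ :
            Σ v : {v : V // v ≠ d0 e₀}, GV v.1) = ⟨⟨d1 e₀, Ne.symm hnl⟩, GG.bd1 e₀ x⟩ :=
        subtype_sigma (cmapHom0_neg GG e₀ hiso (Ne.symm hnl) _)
      have h0 : (⟨⟨cmapV (d0 e₀) (d1 e₀) (d0 e₀), cmapV_ne (Ne.symm hnl) _⟩,
            cmapHom0 GG e₀ hiso (d0 e₀) (GG.bd0 e₀ x)⟩ :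
            Σ v : {v : V // v ≠ d0 e₀}, GV v.1) = ⟨⟨d1 e₀, Ne.symm hnl⟩, GG.bd1 e₀ x⟩ := by
        apply subtype_sigma
        rw [cmapHom0_pos GG e₀ hiso]
        have hx : (MulEquiv.ofBijective (GG.bd0 e₀) hiso).symm ((GG.bd0 e₀) x) = x :=
          (MulEquiv.ofBijective (GG.bd0 e₀) hiso).symm_apply_apply x
        rw [hx]
      rw [h1, h0]
    · rw [dif_neg h]
      rw [mul_inv_eq_one]
      exact FG.bs (collapse0 GG e₀ hnl hiso) {e : {e : E // e ≠ e₀} | e.1 ∈ Tr} ⟨e, h⟩ x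
  · simp only [FreeGroup.lift_apply_of, phiGen0]
    by_cases h : e = e₀
    · rw [dif_pos h]
    · rw [dif_neg h]
      exact FG.tree _ _ he

lemma psiGen0_rels (he₀ : e₀ ∈ Tr) : ∀ r ∈ GoGRels (collapse0 GG e₀ hnl hiso)
      {e : {e : E // e ≠ e₀} | e.1 ∈ Tr},
    FreeGroup.lift (psiGen0 GG e₀ Tr) r = 1 := by
  rintro r (⟨v, a, b, rfl⟩ | ⟨e, x, rfl⟩ | ⟨e, he, rfl⟩)
  · simp only [map_mul, map_inv, FreeGroup.lift_apply_of, psiGen0, mul_inv_eq_one]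
    exact FG.mul GG Tr v.1 a b
  · simp only [map_mul, map_inv, FreeGroup.lift_apply_of, psiGen0, mul_inv_eq_one]
    show PresentedGroup.of (Sum.inr e.1) *
        PresentedGroup.of (Sum.inl ⟨cmapV (d0 e₀) (d1 e₀) (d1 e.1),
          cmapHom0 GG e₀ hiso (d1 e.1) (GG.bd1 e.1 x)⟩) *
        (PresentedGroup.of (rels := GoGRels GG Tr) (Sum.inr e.1))⁻¹ =
      PresentedGroup.of (Sum.inl ⟨cmapV (d0 e₀) (d1 e₀) (d0 e.1),
          cmapHom0 GG e₀ hiso (d0 e.1) (GG.bd0 e.1 x)⟩)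
    rw [key2_0 GG e₀ hiso Tr he₀, key2_0 GG e₀ hiso Tr he₀]
    exact FG.bs GG Tr e.1 x
  · simp only [FreeGroup.lift_apply_of, psiGen0]
    exact FG.tree _ _ he

noncomputable def case0_equiv (he₀ : e₀ ∈ Tr) :
    FundGroup GG Tr ≃* FundGroup (collapse0 GG e₀ hnl hiso)
      {e : {e : E // e ≠ e₀} | e.1 ∈ Tr} := by
  set φ := PresentedGroup.toGroup (phiGen0_rels GG e₀ hnl hiso Tr) with hφ
  set ψ := PresentedGroup.toGroup (psiGen0_rels GG e₀ hnl hiso Tr he₀) with hψ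
  have hleft : ψ.comp φ = MonoidHom.id _ := by
    apply PresentedGroup.ext
    rintro (⟨v, a⟩ | e)
    · rw [MonoidHom.comp_apply]
      rw [hφ, PresentedGroup.toGroup.of, hψ]
      show PresentedGroup.toGroup (psiGen0_rels GG e₀ hnl hiso Tr he₀)
        (PresentedGroup.of (Sum.inl ⟨⟨cmapV (d0 e₀) (d1 e₀) v, cmapV_ne (Ne.symm hnl) v⟩,
          cmapHom0 GG e₀ hiso v a⟩)) = PresentedGroup.of (Sum.inl ⟨v, a⟩)
      rw [PresentedGroup.toGroup.of]
      exact key2_0 GG e₀ hiso Tr he₀ v a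
    · rw [MonoidHom.comp_apply]
      rw [hφ, PresentedGroup.toGroup.of]
      by_cases h : e = e₀
      · subst e
        show ψ (dite _ _ _) = _
        rw [dif_pos rfl, map_one]
        exact (FG.tree GG Tr he₀).symm
      · show ψ (dite _ _ _) = _
        rw [dif_neg h, hψ, PresentedGroup.toGroup.of]
        rfl
  have hright : φ.comp ψ = MonoidHom.id _ := by
    apply PresentedGroup.ext
    rintro (⟨v, a⟩ | e)
    · rw [MonoidHom.comp_apply]
      rw [hψ, PresentedGroup.toGroup.of, hφ]
      show PresentedGroup.toGroup (phiGen0_rels GG e₀ hnl hiso Tr)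
        (PresentedGroup.of (Sum.inl ⟨v.1, a⟩)) =
        (MonoidHom.id _) (PresentedGroup.of (Sum.inl ⟨v, a⟩))
      rw [PresentedGroup.toGroup.of]
      show PresentedGroup.of (rels := GoGRels (collapse0 GG e₀ hnl hiso)
          {e : {e : E // e ≠ e₀} | e.1 ∈ Tr})
          (Sum.inl ⟨⟨cmapV (d0 e₀) (d1 e₀) v.1, cmapV_ne (Ne.symm hnl) v.1⟩,
          cmapHom0 GG e₀ hiso v.1 a⟩) =
        PresentedGroup.of (Sum.inl ⟨v, a⟩)
      rw [subtype_sigma (x := ⟨cmapV (d0 e₀) (d1 e₀) v.1, cmapV_ne (Ne.symm hnl) v.1⟩) (y := v)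
        (cmapHom0_neg GG e₀ hiso v.2 a)]
    · rw [MonoidHom.comp_apply]
      rw [hψ, PresentedGroup.toGroup.of, hφ]
      show PresentedGroup.toGroup (phiGen0_rels GG e₀ hnl hiso Tr)
        (PresentedGroup.of (Sum.inr e.1)) =
        (MonoidHom.id _) (PresentedGroup.of (Sum.inr e))
      rw [PresentedGroup.toGroup.of]
      show dite _ _ _ = _
      rw [dif_neg e.2]
      rfl
  exact
    { toFun := φ, invFun := ψ,
      left_inv := fun x => DFunLike.congr_fun hleft x,
      right_inv := fun x => DFunLike.congr_fun hright x,
      map_mul' := map_mul φ }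

end Case0


/-- Let `(𝒢, Γ)` be a finite graph of groups and `e₀` a fictitious edge:
a non-loop for which one of the two edge monomorphisms `∂ᵢ : 𝒢(e₀) → 𝒢(dᵢ(e₀))` is an
isomorphism.  Then the fundamental group of the graph of groups obtained by collapsing `e₀`
(removing `e₀` and identifying its endpoints, the new vertex group being the endpoint group
into which `∂` is not an isomorphism) is isomorphic to the fundamental group of `(𝒢, Γ)`.
(Fundamental groups are computed with respect to a maximal subtree `Tr` containing `e₀`.) -/
theorem stmt5 {V E : Type} [DecidableEq V] [Finite V] [Finite E] {d0 d1 : E → V}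
    {GV : V → Type} {GE : E → Type} [∀ v, Group (GV v)] [∀ e, Group (GE e)]
    (GG : GraphOfGroups V E d0 d1 GV GE) (hinj : GG.Injective)
    (e₀ : E) (hnl : d0 e₀ ≠ d1 e₀)
    (Tr : Set E) (hTr : IsSpanningTree d0 d1 Tr) (he₀ : e₀ ∈ Tr) :
    (∀ hiso : Function.Bijective (GG.bd0 e₀),
      Nonempty (FundGroup GG Tr ≃*
        FundGroup (collapse0 GG e₀ hnl hiso) {e : {e : E // e ≠ e₀} | e.1 ∈ Tr})) ∧
    (∀ hiso : Function.Bijective (GG.bd1 e₀),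
      Nonempty (FundGroup GG Tr ≃*
        FundGroup (collapse1 GG e₀ hnl hiso) {e : {e : E // e ≠ e₀} | e.1 ∈ Tr})) := by
  
  haveI := Classical.decEq E
  exact ⟨fun hiso => ⟨case0_equiv GG e₀ hnl hiso Tr he₀⟩,
    fun hiso => ⟨case1_equiv GG e₀ hnl hiso Tr he₀⟩⟩
end

section
/- Let G be a group acting on a tree T with finitely many orbits of edges, let H be a normal subgroup of G of index p (p prime), and let V₁ be the set of vertices of the quotient graph H\T fixed by the induced action of G/H ≅ Z/p, with V₂ the set of moved vertices, and E₁₂ the set of edges of H\T joining V₁ to V₂. Writing Γ = G\T, one has |E(H\T)| = |E(Γ(V₁))| + p·|E(Γ(V₂))| + p·|E₁₂|, where Γ(V_i) denotes the subgraph of H\T spanned by V_i; in particular |E(H\T)| ≥ |E(Γ)|. -/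
section TreeAction

variable {G VT ET : Type} [Group G] [MulAction G VT] [MulAction G ET]

/-- `G` acts on the oriented graph `(VT, ET, d0, d1)`: the action commutes with the two
incidence maps (in particular the action is without inversion of edges). -/
def ActsOnGraph (G : Type) [Group G] [MulAction G VT] [MulAction G ET]
    (d0 d1 : ET → VT) : Prop :=
  ∀ (g : G) (e : ET), d0 (g • e) = g • d0 e ∧ d1 (g • e) = g • d1 e

/-- The oriented multigraph `(VT, ET, d0, d1)` is a (combinatorial) tree: no loops, no
repeated edges, and the associated simple graph is a tree. -/
def IsTreeGraph (d0 d1 : ET → VT) : Prop :=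
  (∀ e, d0 e ≠ d1 e) ∧
  (∀ e e', (d0 e = d0 e' ∧ d1 e = d1 e') ∨ (d0 e = d1 e' ∧ d1 e = d0 e') → e = e') ∧
  (SimpleGraph.fromRel fun a b => ∃ e, d0 e = a ∧ d1 e = b).IsTree

end TreeAction

section Stmt9Aux

open MulAction

variable {G X ET : Type} [Group G] [MulAction G X] [MulAction G ET]

private lemma stmt9_mem_orbit_sub (H : Subgroup G) {e x : X} :
    x ∈ orbit H e ↔ ∃ g ∈ H, g • e = x := by
  constructor
  · rintro ⟨⟨g, hg⟩, rfl⟩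
    exact ⟨g, hg, rfl⟩
  · rintro ⟨g, hg, rfl⟩
    exact ⟨⟨g, hg⟩, rfl⟩

/-- The subgroup of elements sending `e` into its `H`-orbit. -/
private def stmt9K (H : Subgroup G) (hH : H.Normal) (e : ET) : Subgroup G where
  carrier := {g : G | g • e ∈ orbit H e}
  one_mem' := by
    simp only [Set.mem_setOf_eq, one_smul]
    exact mem_orbit_self e
  mul_mem' := by
    intro a b ha hb
    simp only [Set.mem_setOf_eq] at ha hb ⊢
    obtain ⟨h1, hm1, h1e⟩ := (stmt9_mem_orbit_sub H).1 ha
    obtain ⟨h2, hm2, h2e⟩ := (stmt9_mem_orbit_sub H).1 hb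
    refine (stmt9_mem_orbit_sub H).2 ⟨a * h2 * a⁻¹ * h1, mul_mem (hH.conj_mem h2 hm2 a) hm1, ?_⟩
    rw [mul_smul, h1e, mul_smul, inv_smul_smul, mul_smul, h2e, ← mul_smul]
  inv_mem' := by
    intro a ha
    simp only [Set.mem_setOf_eq] at ha ⊢
    obtain ⟨h1, hm1, h1e⟩ := (stmt9_mem_orbit_sub H).1 ha
    refine (stmt9_mem_orbit_sub H).2 ⟨a⁻¹ * h1⁻¹ * a, ?_, ?_⟩
    · have := hH.conj_mem _ (inv_mem hm1) a⁻¹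
      rwa [inv_inv] at this
    · rw [mul_smul, mul_smul, ← h1e, inv_smul_smul]

private lemma stmt9_le_K (H : Subgroup G) (hH : H.Normal) (e : ET) :
    H ≤ stmt9K H hH e :=
  fun g hg => (stmt9_mem_orbit_sub H).2 ⟨g, hg, rfl⟩

private lemma stmt9_stab (H : Subgroup G) (hH : H.Normal) {p : ℕ} (hp : p.Prime)
    (hidx : H.index = p) (e : ET) (hne : ∃ g₀ : G, g₀ • e ∉ orbit H e) :
    ∀ g : G, g • e ∈ orbit H e → g ∈ H := by
  intro g hg
  have hle := stmt9_le_K H hH e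
  have hmul := Subgroup.relIndex_mul_index hle
  rw [hidx] at hmul
  have hdvd : (stmt9K H hH e).index ∣ p := Dvd.intro_left _ hmul
  rcases hp.eq_one_or_self_of_dvd _ hdvd with h1 | hpp
  · exfalso
    obtain ⟨g₀, hg₀⟩ := hne
    have htop : stmt9K H hH e = ⊤ := Subgroup.index_eq_one.1 h1
    have : g₀ ∈ stmt9K H hH e := htop ▸ Subgroup.mem_top g₀
    exact hg₀ this
  · have hrel : H.relIndex (stmt9K H hH e) = 1 := by
      rw [hpp] at hmul
      exact Nat.eq_of_mul_eq_mul_right hp.pos (by rw [hmul, one_mul])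
    exact Subgroup.relIndex_eq_one.1 hrel hg

/-- The natural projection from `H`-orbits to `G`-orbits. -/
private def stmt9π (H : Subgroup G) :
    Quotient (orbitRel H ET) → Quotient (orbitRel G ET) :=
  Quotient.map' id (by
    intro a b hab
    obtain ⟨g, _, hge⟩ := (stmt9_mem_orbit_sub H).1 hab
    exact ⟨g, hge⟩)

/-- Mapping `G ⧸ H` to the `H`-orbits inside the `G`-orbit of `e`. -/
private def stmt9f (H : Subgroup G) (hH : H.Normal) (e : ET) :
    G ⧸ H → Quotient (orbitRel H ET) :=
  Quotient.map' (fun g => g • e) (by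
    intro a b hab
    rw [QuotientGroup.leftRel_apply] at hab
    refine (stmt9_mem_orbit_sub H).2 ⟨a * b⁻¹, ?_, ?_⟩
    · have h1 : (a⁻¹ * b)⁻¹ ∈ H := inv_mem hab
      have h2 : b * (a⁻¹ * b)⁻¹ * b⁻¹ ∈ H := hH.conj_mem _ h1 b
      have heq : b * (a⁻¹ * b)⁻¹ * b⁻¹ = a * b⁻¹ := by group
      rwa [heq] at h2
    · rw [smul_smul, inv_mul_cancel_right])

private lemma stmt9f_maps (H : Subgroup G) (hH : H.Normal) (e : ET) (y : G ⧸ H) :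
    stmt9π H (stmt9f H hH e y) = Quotient.mk (orbitRel G ET) e := by
  induction y using Quotient.inductionOn' with
  | h g =>
    show Quotient.mk (orbitRel G ET) (g • e) = Quotient.mk (orbitRel G ET) e
    exact Quotient.sound' ⟨g, rfl⟩

private lemma stmt9f_fiber (H : Subgroup G) (hH : H.Normal) (e : ET)
    (x : Quotient (orbitRel H ET)) (hx : stmt9π H x = Quotient.mk (orbitRel G ET) e) :
    ∃ y, stmt9f H hH e y = x := by
  obtain ⟨e', rfl⟩ := Quotient.exists_rep x
  have h1 : (e' : ET) ∈ orbit G e := Quotient.exact' hx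
  obtain ⟨g, hg⟩ := h1
  have hg' : g • e = e' := hg
  refine ⟨Quotient.mk'' g, ?_⟩
  show Quotient.mk (orbitRel H ET) (g • e) = Quotient.mk (orbitRel H ET) e'
  rw [hg']

private lemma stmt9f_inj (H : Subgroup G) (hH : H.Normal) {p : ℕ} (hp : p.Prime)
    (hidx : H.index = p) (e : ET) (hne : ∃ g₀ : G, g₀ • e ∉ orbit H e) :
    Function.Injective (stmt9f H hH e) := by
  intro x y hxy
  obtain ⟨a, rfl⟩ := Quotient.exists_rep x
  obtain ⟨b, rfl⟩ := Quotient.exists_rep y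
  have hrel : (a • e) ∈ orbit H (b • e) := Quotient.exact' hxy
  obtain ⟨h1, hm1, h1e⟩ := (stmt9_mem_orbit_sub H).1 hrel
  have hkey : (a⁻¹ * h1 * b) • e ∈ orbit H e := by
    have heq : (a⁻¹ * h1 * b) • e = e := by
      rw [mul_smul, mul_smul, h1e, inv_smul_smul]
    rw [heq]
    exact mem_orbit_self e
  have hmem : a⁻¹ * h1 * b ∈ H := stmt9_stab H hH hp hidx e hne _ hkey
  have h3 : a⁻¹ * h1⁻¹ * a ∈ H := by
    have := hH.conj_mem _ (inv_mem hm1) a⁻¹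
    rwa [inv_inv] at this
  have h4 : a⁻¹ * b ∈ H := by
    have hmm := mul_mem h3 hmem
    have heq : (a⁻¹ * h1⁻¹ * a) * (a⁻¹ * h1 * b) = a⁻¹ * b := by group
    rwa [heq] at hmm
  exact Quotient.sound' (QuotientGroup.leftRel_apply.2 h4)

private lemma stmt9_card_class (H : Subgroup G) (hH : H.Normal) {p : ℕ} (hp : p.Prime)
    (hidx : H.index = p) (P : ET → Prop)
    (hPinv : ∀ (g : G) (e : ET), P e → P (g • e))
    (hPmoved : ∀ e : ET, P e → ∃ g₀ : G, g₀ • e ∉ orbit H e) :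
    Nat.card {q : Quotient (orbitRel H ET) |
        ∃ e : ET, Quotient.mk (orbitRel H ET) e = q ∧ P e} =
      p * Nat.card {q : Quotient (orbitRel G ET) |
        ∃ e : ET, Quotient.mk (orbitRel G ET) e = q ∧ P e} := by
  classical
  set BH := {q : Quotient (orbitRel H ET) |
      ∃ e : ET, Quotient.mk (orbitRel H ET) e = q ∧ P e} with hBHdef
  set BG := {q : Quotient (orbitRel G ET) |
      ∃ e : ET, Quotient.mk (orbitRel G ET) e = q ∧ P e} with hBGdef
  have hπres : ∀ x : BH, stmt9π H x.1 ∈ BG := by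
    rintro ⟨x, e, he, hPe⟩
    subst he
    exact ⟨e, rfl, hPe⟩
  let πres : BH → BG := fun x => ⟨stmt9π H x.1, hπres x⟩
  have hfib : ∀ q : BG, ∃ f : G ⧸ H → {x : BH // πres x = q}, Function.Bijective f := by
    rintro ⟨q, hq⟩
    obtain ⟨e, he, hPe⟩ := hq
    have hmem : ∀ y : G ⧸ H, stmt9f H hH e y ∈ BH := by
      intro y
      induction y using Quotient.inductionOn' with
      | h g => exact ⟨g • e, rfl, hPinv g e hPe⟩
    refine ⟨fun y => ⟨⟨stmt9f H hH e y, hmem y⟩, ?_⟩, ?_, ?_⟩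
    · apply Subtype.ext
      show stmt9π H (stmt9f H hH e y) = q
      rw [stmt9f_maps]
      exact he
    · intro y1 y2 h12
      have hval : stmt9f H hH e y1 = stmt9f H hH e y2 :=
        congrArg (fun z => z.1.1) h12
      exact stmt9f_inj H hH hp hidx e (hPmoved e hPe) hval
    · rintro ⟨⟨x, hxBH⟩, hxq⟩
      have hval : stmt9π H x = q := congrArg Subtype.val hxq
      rw [← he] at hval
      obtain ⟨y, hy⟩ := stmt9f_fiber H hH e x hval
      exact ⟨y, Subtype.ext (Subtype.ext hy)⟩
  choose f hf using hfib
  have equiv1 : BH ≃ (Σ q : BG, {x : BH // πres x = q}) := (Equiv.sigmaFiberEquiv πres).symm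
  have equiv2 : (Σ q : BG, {x : BH // πres x = q}) ≃ (Σ _ : BG, G ⧸ H) :=
    Equiv.sigmaCongrRight fun q => (Equiv.ofBijective (f q) (hf q)).symm
  have equiv3 : (Σ _ : BG, G ⧸ H) ≃ BG × (G ⧸ H) := Equiv.sigmaEquivProd BG (G ⧸ H)
  have hcardGH : Nat.card (G ⧸ H) = p := hidx
  calc Nat.card BH = Nat.card (BG × (G ⧸ H)) :=
        Nat.card_congr (equiv1.trans (equiv2.trans equiv3))
    _ = Nat.card BG * Nat.card (G ⧸ H) := Nat.card_prod _ _
    _ = p * Nat.card BG := by rw [hcardGH, mul_comm]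

end Stmt9Aux

/-- Let `G` act on a tree `T` with finitely many orbits of edges, let `H` be
a normal subgroup of prime index `p`, and let `V₁` be the set of vertices of `H\T` fixed by
the induced action of `G/H ≅ ℤ/p` (here described at the level of `T`: the `H`-orbit of `v`
is fixed iff `g • v` lies in the `H`-orbit of `v` for all `g ∈ G`), `V₂` the moved ones.
Then, counting edges of `H\T` (i.e. `H`-orbits of edges) and writing `Γ = G\T`:
`|E(H\T)| = |E(Γ(V₁))| + p·|E(Γ(V₂))| + p·|E₁₂|`, where the edges spanned by `V₁` are
counted in `H\T` and the edges spanned by `V₂`, resp. joining `V₁` to `V₂`, are counted by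
their `G`-orbits; in particular `|E(H\T)| ≥ |E(Γ)|`. -/
theorem stmt9 {G VT ET : Type} [Group G] [MulAction G VT] [MulAction G ET]
    (d0 d1 : ET → VT) (hact : ActsOnGraph G d0 d1) (htree : IsTreeGraph d0 d1)
    (hEfin : Finite (Quotient (MulAction.orbitRel G ET)))
    (H : Subgroup G) (hH : H.Normal) {p : ℕ} (hp : p.Prime) (hidx : H.index = p)
    (V1 : Set VT) (hV1 : V1 = {v : VT | ∀ g : G, g • v ∈ MulAction.orbit H v}) :
    Nat.card (Quotient (MulAction.orbitRel H ET)) =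
      Nat.card {q : Quotient (MulAction.orbitRel H ET) |
          ∃ e : ET, Quotient.mk (MulAction.orbitRel H ET) e = q ∧
            d0 e ∈ V1 ∧ d1 e ∈ V1} +
      p * Nat.card {q : Quotient (MulAction.orbitRel G ET) |
          ∃ e : ET, Quotient.mk (MulAction.orbitRel G ET) e = q ∧
            d0 e ∉ V1 ∧ d1 e ∉ V1} +
      p * Nat.card {q : Quotient (MulAction.orbitRel G ET) |
          ∃ e : ET, Quotient.mk (MulAction.orbitRel G ET) e = q ∧
            ((d0 e ∈ V1 ∧ d1 e ∉ V1) ∨ (d0 e ∉ V1 ∧ d1 e ∈ V1))} ∧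
    Nat.card (Quotient (MulAction.orbitRel G ET)) ≤
      Nat.card (Quotient (MulAction.orbitRel H ET)) := by
  classical
  -- `V1` is `G`-invariant
  have hV1inv : ∀ (g : G) (v : VT), v ∈ V1 → g • v ∈ V1 := by
    intro g v hv
    rw [hV1] at hv ⊢
    intro g'
    obtain ⟨h0, h0m, h0e⟩ := (stmt9_mem_orbit_sub H).1 (hv g)
    obtain ⟨h1, h1m, h1e⟩ := (stmt9_mem_orbit_sub H).1 (hv (g' * g))
    refine (stmt9_mem_orbit_sub H).2 ⟨h1 * h0⁻¹, mul_mem h1m (inv_mem h0m), ?_⟩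
    calc (h1 * h0⁻¹) • (g • v) = h1 • (h0⁻¹ • (g • v)) := mul_smul _ _ _
      _ = h1 • (h0⁻¹ • (h0 • v)) := by rw [h0e]
      _ = h1 • v := by rw [inv_smul_smul]
      _ = (g' * g) • v := h1e
      _ = g' • (g • v) := mul_smul _ _ _
  have hV1iff : ∀ (g : G) (v : VT), g • v ∈ V1 ↔ v ∈ V1 := by
    intro g v
    constructor
    · intro h
      have := hV1inv g⁻¹ _ h
      rwa [inv_smul_smul] at this
    · exact hV1inv g v
  have hc0 : ∀ (g : G) (e : ET), d0 (g • e) ∈ V1 ↔ d0 e ∈ V1 := by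
    intro g e
    rw [(hact g e).1, hV1iff]
  have hc1 : ∀ (g : G) (e : ET), d1 (g • e) ∈ V1 ↔ d1 e ∈ V1 := by
    intro g e
    rw [(hact g e).2, hV1iff]
  -- an edge with a moved endpoint is moved
  have hmoved : ∀ e : ET, (d0 e ∉ V1 ∨ d1 e ∉ V1) →
      ∃ g₀ : G, g₀ • e ∉ MulAction.orbit H e := by
    intro e he
    rcases he with h | h
    · rw [hV1] at h
      simp only [Set.mem_setOf_eq] at h
      push_neg at h
      obtain ⟨g₀, hg₀⟩ := h
      refine ⟨g₀, fun hc => hg₀ ?_⟩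
      obtain ⟨g, hgm, hge⟩ := (stmt9_mem_orbit_sub H).1 hc
      refine (stmt9_mem_orbit_sub H).2 ⟨g, hgm, ?_⟩
      rw [← (hact g e).1, hge, (hact g₀ e).1]
    · rw [hV1] at h
      simp only [Set.mem_setOf_eq] at h
      push_neg at h
      obtain ⟨g₀, hg₀⟩ := h
      refine ⟨g₀, fun hc => hg₀ ?_⟩
      obtain ⟨g, hgm, hge⟩ := (stmt9_mem_orbit_sub H).1 hc
      refine (stmt9_mem_orbit_sub H).2 ⟨g, hgm, ?_⟩
      rw [← (hact g e).2, hge, (hact g₀ e).2]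
  -- the class of an edge only depends on its `H`-orbit
  have hclassH : ∀ e e' : ET,
      Quotient.mk (MulAction.orbitRel H ET) e = Quotient.mk (MulAction.orbitRel H ET) e' →
      ((d0 e ∈ V1 ↔ d0 e' ∈ V1) ∧ (d1 e ∈ V1 ↔ d1 e' ∈ V1)) := by
    intro e e' hee
    have hrel : e ∈ MulAction.orbit H e' := Quotient.exact' hee
    obtain ⟨g, hgm, rfl⟩ := (stmt9_mem_orbit_sub H).1 hrel
    exact ⟨hc0 g e', hc1 g e'⟩
  -- finiteness
  have hGHfin : Finite (G ⧸ H) := by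
    refine Nat.finite_of_card_ne_zero ?_
    have hcardGH : Nat.card (G ⧸ H) = p := hidx
    rw [hcardGH]
    exact hp.ne_zero
  haveI := hGHfin
  have hQHfin : Finite (Quotient (MulAction.orbitRel H ET)) := by
    have hsurj : Function.Surjective
        (fun z : (Quotient (MulAction.orbitRel G ET)) × (G ⧸ H) =>
          stmt9f H hH z.1.out z.2) := by
      intro x
      obtain ⟨e, rfl⟩ := Quotient.exists_rep x
      have h1 := @Quotient.mk_out _ (MulAction.orbitRel G ET) e
      have h2 : e ∈ MulAction.orbit G
          (Quotient.out (Quotient.mk (MulAction.orbitRel G ET) e)) :=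
        (MulAction.orbitRel G ET).symm' h1
      obtain ⟨g, hg⟩ := h2
      have hg' : g • (Quotient.mk (MulAction.orbitRel G ET) e).out = e := hg
      refine ⟨(Quotient.mk (MulAction.orbitRel G ET) e, Quotient.mk'' g), ?_⟩
      show Quotient.mk (MulAction.orbitRel H ET)
          (g • (Quotient.mk (MulAction.orbitRel G ET) e).out) =
        Quotient.mk (MulAction.orbitRel H ET) e
      rw [hg']
    exact Finite.of_surjective _ hsurj
  haveI := hQHfin
  -- the inequality
  have hπsurj : Function.Surjective (stmt9π (ET := ET) H) := by
    intro q
    obtain ⟨e, rfl⟩ := Quotient.exists_rep q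
    exact ⟨Quotient.mk (MulAction.orbitRel H ET) e, rfl⟩
  have hineq := Nat.card_le_card_of_surjective _ hπsurj
  refine ⟨?_, hineq⟩
  -- the counting of the moved classes
  have hB : Nat.card {q : Quotient (MulAction.orbitRel H ET) |
        ∃ e : ET, Quotient.mk (MulAction.orbitRel H ET) e = q ∧
          d0 e ∉ V1 ∧ d1 e ∉ V1} =
      p * Nat.card {q : Quotient (MulAction.orbitRel G ET) |
        ∃ e : ET, Quotient.mk (MulAction.orbitRel G ET) e = q ∧
          d0 e ∉ V1 ∧ d1 e ∉ V1} := by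
    refine stmt9_card_class H hH hp hidx _ ?_ ?_
    · intro g e hP
      exact ⟨fun hh => hP.1 ((hc0 g e).1 hh), fun hh => hP.2 ((hc1 g e).1 hh)⟩
    · intro e hP
      exact hmoved e (Or.inl hP.1)
  have hC : Nat.card {q : Quotient (MulAction.orbitRel H ET) |
        ∃ e : ET, Quotient.mk (MulAction.orbitRel H ET) e = q ∧
          ((d0 e ∈ V1 ∧ d1 e ∉ V1) ∨ (d0 e ∉ V1 ∧ d1 e ∈ V1))} =
      p * Nat.card {q : Quotient (MulAction.orbitRel G ET) |
        ∃ e : ET, Quotient.mk (MulAction.orbitRel G ET) e = q ∧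
          ((d0 e ∈ V1 ∧ d1 e ∉ V1) ∨ (d0 e ∉ V1 ∧ d1 e ∈ V1))} := by
    refine stmt9_card_class H hH hp hidx _ ?_ ?_
    · intro g e hP
      rcases hP with ⟨hl, hr⟩ | ⟨hl, hr⟩
      · exact Or.inl ⟨(hc0 g e).2 hl, fun hh => hr ((hc1 g e).1 hh)⟩
      · exact Or.inr ⟨fun hh => hl ((hc0 g e).1 hh), (hc1 g e).2 hr⟩
    · intro e hP
      rcases hP with ⟨_, hr⟩ | ⟨hl, _⟩
      · exact hmoved e (Or.inr hr)
      · exact hmoved e (Or.inl hl)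
  -- the partition of the `H`-orbits
  set A := {q : Quotient (MulAction.orbitRel H ET) |
      ∃ e : ET, Quotient.mk (MulAction.orbitRel H ET) e = q ∧
        d0 e ∈ V1 ∧ d1 e ∈ V1} with hAdef
  set B := {q : Quotient (MulAction.orbitRel H ET) |
      ∃ e : ET, Quotient.mk (MulAction.orbitRel H ET) e = q ∧
        d0 e ∉ V1 ∧ d1 e ∉ V1} with hBdef
  set C := {q : Quotient (MulAction.orbitRel H ET) |
      ∃ e : ET, Quotient.mk (MulAction.orbitRel H ET) e = q ∧
        ((d0 e ∈ V1 ∧ d1 e ∉ V1) ∨ (d0 e ∉ V1 ∧ d1 e ∈ V1))} with hCdef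
  have hunion : (Set.univ : Set (Quotient (MulAction.orbitRel H ET))) = A ∪ (B ∪ C) := by
    ext q
    simp only [Set.mem_univ, true_iff, Set.mem_union, hAdef, hBdef, hCdef, Set.mem_setOf_eq]
    obtain ⟨e, rfl⟩ := Quotient.exists_rep q
    by_cases h0 : d0 e ∈ V1 <;> by_cases h1 : d1 e ∈ V1
    · exact Or.inl ⟨e, rfl, h0, h1⟩
    · exact Or.inr (Or.inr ⟨e, rfl, Or.inl ⟨h0, h1⟩⟩)
    · exact Or.inr (Or.inr ⟨e, rfl, Or.inr ⟨h0, h1⟩⟩)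
    · exact Or.inr (Or.inl ⟨e, rfl, h0, h1⟩)
  have hdisjAB : Disjoint A B := by
    rw [Set.disjoint_left]
    rintro q ⟨e, he, hP⟩ ⟨e', he', hP'⟩
    have hcl := hclassH e e' (he.trans he'.symm)
    exact hP'.1 (hcl.1.1 hP.1)
  have hdisjAC : Disjoint A C := by
    rw [Set.disjoint_left]
    rintro q ⟨e, he, hP⟩ ⟨e', he', hP'⟩
    have hcl := hclassH e e' (he.trans he'.symm)
    rcases hP' with ⟨_, hr⟩ | ⟨hl, _⟩
    · exact hr (hcl.2.1 hP.2)
    · exact hl (hcl.1.1 hP.1)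
  have hdisjBC : Disjoint B C := by
    rw [Set.disjoint_left]
    rintro q ⟨e, he, hP⟩ ⟨e', he', hP'⟩
    have hcl := hclassH e e' (he.trans he'.symm)
    rcases hP' with ⟨hl, _⟩ | ⟨_, hr⟩
    · exact hP.1 (hcl.1.2 hl)
    · exact hP.2 (hcl.2.2 hr)
  have hcardsplit : Nat.card (Quotient (MulAction.orbitRel H ET)) =
      Nat.card A + (Nat.card B + Nat.card C) := by
    rw [Nat.card_coe_set_eq, Nat.card_coe_set_eq, Nat.card_coe_set_eq,
      ← Set.ncard_univ, hunion,
      Set.ncard_union_eq (Set.disjoint_union_right.2 ⟨hdisjAB, hdisjAC⟩)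
        (Set.toFinite _) (Set.toFinite _),
      Set.ncard_union_eq hdisjBC (Set.toFinite _) (Set.toFinite _)]
  rw [hcardsplit, hB, hC, add_assoc]
end

section
/- Let G be the fundamental group of two reduced finite graphs of finite groups (𝒢, Γ) and (𝒢', Γ'). Suppose (i) the maximal finite subgroups of G are, up to conjugacy, exactly the vertex groups of each decomposition, with no two distinct vertex groups of the same decomposition conjugate, and (ii) G modulo the normal subgroup generated by all finite subgroups is free of rank |E(Γ)| − |V(Γ)| + 1 = |E(Γ')| − |V(Γ')| + 1. Then |V(Γ)| = |V(Γ')|, |E(Γ)| = |E(Γ')|, and |Γ| = |Γ'|. -/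
/-- The set of maximal finite subgroups of `G`. -/
def MaxFin (G : Type) [Group G] : Set (Subgroup G) :=
  {K : Subgroup G | Finite K ∧ ∀ L : Subgroup G, Finite L → K ≤ L → K = L}

lemma conjMap_conjMap {G : Type} [Group G] (a b : G) (K : Subgroup G) :
    Subgroup.map (MulAut.conj a).toMonoidHom
      (Subgroup.map (MulAut.conj b).toMonoidHom K) =
    Subgroup.map (MulAut.conj (a * b)).toMonoidHom K := by
  rw [Subgroup.map_map]
  congr 1
  ext x
  simp [mul_assoc]

/-- Let `G` be the fundamental group of two reduced finite graphs of finite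
groups `(𝒢, Γ)` and `(𝒢', Γ')`.  Suppose (i) the maximal finite subgroups of `G` are, up to
conjugacy, exactly the vertex groups of each decomposition, with no two distinct vertex
groups of the same decomposition conjugate, and (ii) `G` modulo the normal subgroup
generated by all finite subgroups is free of rank `|E(Γ)| − |V(Γ)| + 1 = |E(Γ')| − |V(Γ')| + 1`.
Then `|V(Γ)| = |V(Γ')|`, `|E(Γ)| = |E(Γ')|` and `|Γ| = |Γ'|`. -/
theorem stmt13 {G : Type} [Group G]
    {V E : Type} [Finite V] [Finite E] {d0 d1 : E → V} {GV : V → Type} {GE : E → Type}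
    [∀ v, Group (GV v)] [∀ e, Group (GE e)] [∀ v, Finite (GV v)] [∀ e, Finite (GE e)]
    (GG : GraphOfGroups V E d0 d1 GV GE) (hinj : GG.Injective) (hred : GG.Reduced)
    (Tr : Set E) (hTr : IsSpanningTree d0 d1 Tr) (θ : FundGroup GG Tr ≃* G)
    {V' E' : Type} [Finite V'] [Finite E'] {d0' d1' : E' → V'}
    {GV' : V' → Type} {GE' : E' → Type}
    [∀ v, Group (GV' v)] [∀ e, Group (GE' e)] [∀ v, Finite (GV' v)] [∀ e, Finite (GE' e)]
    (GG' : GraphOfGroups V' E' d0' d1' GV' GE') (hinj' : GG'.Injective)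
    (hred' : GG'.Reduced) (Tr' : Set E') (hTr' : IsSpanningTree d0' d1' Tr')
    (θ' : FundGroup GG' Tr' ≃* G)
    -- hypothesis (i) for (𝒢, Γ):
    (h1 : ∀ v : V, Subgroup.map θ.toMonoidHom (vertexSubgroup GG Tr v) ∈ MaxFin G)
    (h2 : ∀ K ∈ MaxFin G, ∃ (v : V) (g : G),
      Subgroup.map (MulAut.conj g).toMonoidHom
        (Subgroup.map θ.toMonoidHom (vertexSubgroup GG Tr v)) = K)
    (h3 : ∀ (v w : V) (g : G),
      Subgroup.map (MulAut.conj g).toMonoidHom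
          (Subgroup.map θ.toMonoidHom (vertexSubgroup GG Tr v)) =
        Subgroup.map θ.toMonoidHom (vertexSubgroup GG Tr w) → v = w)
    -- hypothesis (i) for (𝒢', Γ'):
    (h1' : ∀ v : V', Subgroup.map θ'.toMonoidHom (vertexSubgroup GG' Tr' v) ∈ MaxFin G)
    (h2' : ∀ K ∈ MaxFin G, ∃ (v : V') (g : G),
      Subgroup.map (MulAut.conj g).toMonoidHom
        (Subgroup.map θ'.toMonoidHom (vertexSubgroup GG' Tr' v)) = K)
    (h3' : ∀ (v w : V') (g : G),
      Subgroup.map (MulAut.conj g).toMonoidHom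
          (Subgroup.map θ'.toMonoidHom (vertexSubgroup GG' Tr' v)) =
        Subgroup.map θ'.toMonoidHom (vertexSubgroup GG' Tr' w) → v = w)
    -- hypothesis (ii):
    (r : ℕ)
    (hfree : Nonempty ((G ⧸ Subgroup.normalClosure
      (⋃ K ∈ {K : Subgroup G | Finite K}, (K : Set G))) ≃* FreeGroup (Fin r)))
    (hr : Nat.card E + 1 = r + Nat.card V) (hr' : Nat.card E' + 1 = r + Nat.card V') :
    Nat.card V = Nat.card V' ∧ Nat.card E = Nat.card E' ∧
      Nat.card V + Nat.card E = Nat.card V' + Nat.card E' := by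
  have key : ∀ v : V, ∃ (v' : V') (g : G),
      Subgroup.map (MulAut.conj g).toMonoidHom
        (Subgroup.map θ'.toMonoidHom (vertexSubgroup GG' Tr' v')) =
      Subgroup.map θ.toMonoidHom (vertexSubgroup GG Tr v) :=
    fun v => h2' _ (h1 v)
  have key' : ∀ v' : V', ∃ (v : V) (g : G),
      Subgroup.map (MulAut.conj g).toMonoidHom
        (Subgroup.map θ.toMonoidHom (vertexSubgroup GG Tr v)) =
      Subgroup.map θ'.toMonoidHom (vertexSubgroup GG' Tr' v') :=
    fun v' => h2 _ (h1' v')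
  choose f g hfg using key
  choose f' g' hfg' using key'
  have hleft : ∀ v : V, f' (f v) = v := by
    intro v
    apply h3 (f' (f v)) v (g v * g' (f v))
    rw [← conjMap_conjMap, hfg', hfg]
  have hright : ∀ v' : V', f (f' v') = v' := by
    intro v'
    apply h3' (f (f' v')) v' (g' v' * g (f' v'))
    rw [← conjMap_conjMap, hfg, hfg']
  have hcard : Nat.card V = Nat.card V' :=
    Nat.card_congr ⟨f, f', hleft, hright⟩
  exact ⟨hcard, by omega, by omega⟩
end

section
/- Fix a prime p and n ≥ 2. Let G_n be the group with presentation ⟨k_{n−1}, k_n, h_0, …, h_{p^n−1} | k_i^p = h_j^p = 1; [h_i, h_j] = 1 for all i, j; [k_{n−1}, h_i] = 1 for all i ≠ p^{n−1}; k_n = [k_{n−1}, h_{p^{n−1}}] and k_n is central⟩. Then G_n is a finite p-group, and the subgroup generated by h_0, …, h_{p^n−1} is elementary abelian of rank p^n (i.e., the natural map from (Z/p)^{p^n} is injective). -/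
open scoped commutatorElement

/-- Generators of the group `G_n`: `Sum.inl 0 = k_{n-1}`, `Sum.inl 1 = k_n`,
`Sum.inr j = h_j` for `j < p^n`. -/
abbrev GnGen (p n : ℕ) : Type := Fin 2 ⊕ Fin (p ^ n)

/-- The defining relations of `G_n`:
`k_i^p = h_j^p = 1`; the `h`'s commute; `k_{n-1}` commutes with `h_i` for `i ≠ p^{n-1}`;
`k_n = [k_{n-1}, h_{p^{n-1}}]`; and `k_n` is central. -/
def GnRels (p n : ℕ) : Set (FreeGroup (GnGen p n)) :=
  { w | (∃ i : Fin 2, w = (FreeGroup.of (Sum.inl i : GnGen p n)) ^ p) ∨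
        (∃ j : Fin (p ^ n), w = (FreeGroup.of (Sum.inr j : GnGen p n)) ^ p) ∨
        (∃ i j : Fin (p ^ n),
          w = ⁅FreeGroup.of (Sum.inr i : GnGen p n), FreeGroup.of (Sum.inr j)⁆) ∨
        (∃ i : Fin (p ^ n), (i : ℕ) ≠ p ^ (n - 1) ∧
          w = ⁅FreeGroup.of (Sum.inl 0 : GnGen p n), FreeGroup.of (Sum.inr i)⁆) ∨
        (∃ j : Fin (p ^ n), (j : ℕ) = p ^ (n - 1) ∧
          w = (FreeGroup.of (Sum.inl 1 : GnGen p n))⁻¹ *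
            ⁅FreeGroup.of (Sum.inl 0 : GnGen p n), FreeGroup.of (Sum.inr j)⁆) ∨
        (∃ g : GnGen p n, w = ⁅FreeGroup.of (Sum.inl 1 : GnGen p n), FreeGroup.of g⁆) }

/-- The group `G_n` from Wilkes' inaccessible pro-`p` group example. -/
abbrev Gn (p n : ℕ) : Type := PresentedGroup (GnRels p n)

namespace Wilkes

/-! ### Generic power-mod lemmas -/

section PowMod

variable {G : Type*} [Group G] {p : ℕ}

lemma pow_mod {g : G} (hg : g ^ p = 1) (m : ℕ) : g ^ (m % p) = g ^ m := by
  conv_rhs => rw [← Nat.mod_add_div m p, pow_add, pow_mul, hg, one_pow, mul_one]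

lemma pow_val_add [NeZero p] {g : G} (hg : g ^ p = 1) (a b : ZMod p) :
    g ^ (a + b).val = g ^ a.val * g ^ b.val := by
  rw [ZMod.val_add, pow_mod hg, pow_add]

lemma pow_val_mul [NeZero p] {g : G} (hg : g ^ p = 1) (a b : ZMod p) :
    g ^ (a * b).val = (g ^ b.val) ^ a.val := by
  rw [ZMod.val_mul, pow_mod hg, pow_mul', ← pow_mul]

end PowMod

/-! ### The concrete model `Kt` -/

variable (p n : ℕ)

abbrev Vn := Fin (p ^ n) → ZMod p

/-- Linear functional: evaluation at index `p^(n-1)` (or `0` if out of range). -/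
def lam (v : Vn p n) : ZMod p :=
  if h : p ^ (n - 1) < p ^ n then v ⟨p ^ (n - 1), h⟩ else 0

variable {p n}

lemma lam_add (v w : Vn p n) : lam p n (v + w) = lam p n v + lam p n w := by
  unfold lam; split <;> simp

lemma lam_zero : lam p n 0 = 0 := by unfold lam; split <;> simp

lemma lam_neg (v : Vn p n) : lam p n (-v) = - lam p n v := by unfold lam; split <;> simp

lemma lam_single_ne (i : Fin (p ^ n)) (hi : (i : ℕ) ≠ p ^ (n - 1)) :
    lam p n (Pi.single i 1) = 0 := by
  unfold lam
  split
  · rename_i h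
    rw [Pi.single_apply, if_neg]
    intro he
    exact hi (by rw [← he])
  · rfl

lemma lam_single_eq (j : Fin (p ^ n)) (hj : (j : ℕ) = p ^ (n - 1)) :
    lam p n (Pi.single j 1) = 1 := by
  unfold lam
  rw [dif_pos (hj ▸ j.isLt)]
  rw [Pi.single_apply, if_pos (Fin.ext hj.symm)]

variable (p n) in
/-- The concrete Heisenberg-type model of `G_n`. -/
@[ext] structure Kt where
  v : Vn p n
  a : ZMod p
  c : ZMod p

instance : Mul (Kt p n) :=
  ⟨fun x y => ⟨x.v + y.v, x.a + y.a, x.c + y.c + x.a * lam p n y.v⟩⟩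
instance : One (Kt p n) := ⟨⟨0, 0, 0⟩⟩
instance : Inv (Kt p n) :=
  ⟨fun x => ⟨-x.v, -x.a, x.a * lam p n x.v - x.c⟩⟩

lemma Kt.mul_def (x y : Kt p n) :
    x * y = ⟨x.v + y.v, x.a + y.a, x.c + y.c + x.a * lam p n y.v⟩ := rfl
lemma Kt.one_def : (1 : Kt p n) = ⟨0, 0, 0⟩ := rfl
lemma Kt.inv_def (x : Kt p n) : x⁻¹ = ⟨-x.v, -x.a, x.a * lam p n x.v - x.c⟩ := rfl

instance : Group (Kt p n) where
  mul_assoc x y z := by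
    simp only [Kt.mul_def, lam_add]; ext <;> simp <;> ring
  one_mul x := by simp [Kt.mul_def, Kt.one_def]
  mul_one x := by simp [Kt.mul_def, Kt.one_def, lam_zero]
  inv_mul_cancel x := by
    simp only [Kt.mul_def, Kt.inv_def, Kt.one_def, lam_neg]; ext <;> simp <;> ring

lemma Kt.pow_def (w : Vn p n) (a c : ZMod p) (ha : a = 0 ∨ lam p n w = 0) (m : ℕ) :
    (⟨w, a, c⟩ : Kt p n) ^ m = ⟨m • w, m • a, m • c⟩ := by
  induction m with
  | zero => simp [Kt.one_def]
  | succ m ih =>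
      rw [pow_succ, ih, Kt.mul_def]
      ext <;> simp [add_smul]
      rcases ha with h | h <;> simp [h] <;> ring

lemma Kt.central (y : Kt p n) (e : ZMod p) : Commute (⟨0, 0, e⟩ : Kt p n) y := by
  unfold Commute SemiconjBy
  simp only [Kt.mul_def, lam_zero]
  ext <;> simp <;> ring

variable (p n) in
def ktEquiv : Kt p n ≃ (Vn p n) × ZMod p × ZMod p where
  toFun x := (x.v, x.a, x.c)
  invFun y := ⟨y.1, y.2.1, y.2.2⟩
  left_inv _ := rfl
  right_inv _ := rfl

/-! ### Generators and relations in `Gn` -/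

variable (p n)

/-- `k = k_{n-1}` -/
def kk : Gn p n := PresentedGroup.of (Sum.inl 0)
/-- `kn = k_n` -/
def kn : Gn p n := PresentedGroup.of (Sum.inl 1)
/-- `h j` -/
def hh (j : Fin (p ^ n)) : Gn p n := PresentedGroup.of (Sum.inr j)

variable {p n}

lemma rel_one {w : FreeGroup (GnGen p n)} (hw : w ∈ GnRels p n) :
    PresentedGroup.mk (GnRels p n) w = 1 :=
  (QuotientGroup.eq_one_iff w).mpr (Subgroup.subset_normalClosure hw)

lemma kk_pow : (kk p n) ^ p = 1 := by
  have := rel_one (p := p) (n := n) (Or.inl ⟨0, rfl⟩)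
  simp at this; exact this

lemma kn_pow : (kn p n) ^ p = 1 := by
  have := rel_one (p := p) (n := n) (Or.inl ⟨1, rfl⟩)
  simp at this; exact this

lemma hh_pow (j : Fin (p ^ n)) : (hh p n j) ^ p = 1 := by
  have := rel_one (p := p) (n := n) (Or.inr (Or.inl ⟨j, rfl⟩))
  simp at this; exact this

lemma hh_comm (i j : Fin (p ^ n)) : Commute (hh p n i) (hh p n j) := by
  have := rel_one (p := p) (n := n) (Or.inr (Or.inr (Or.inl ⟨i, j, rfl⟩)))
  simp only [map_commutatorElement] at this
  exact (commutatorElement_eq_one_iff_commute).1 this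

lemma hh_pow_pairwise (f : Fin (p ^ n) → ℕ) (s : Set (Fin (p ^ n))) :
    s.Pairwise (Function.onFun Commute fun j => hh p n j ^ f j) :=
  fun a _ b _ _ => (hh_comm a b).pow_pow _ _

lemma kk_comm (i : Fin (p ^ n)) (hi : (i : ℕ) ≠ p ^ (n - 1)) :
    Commute (kk p n) (hh p n i) := by
  have := rel_one (p := p) (n := n) (Or.inr (Or.inr (Or.inr (Or.inl ⟨i, hi, rfl⟩))))
  simp only [map_commutatorElement] at this
  exact (commutatorElement_eq_one_iff_commute).1 this

lemma kn_eq (j : Fin (p ^ n)) (hj : (j : ℕ) = p ^ (n - 1)) :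
    kn p n = ⁅kk p n, hh p n j⁆ := by
  have := rel_one (p := p) (n := n)
    (Or.inr (Or.inr (Or.inr (Or.inr (Or.inl ⟨j, hj, rfl⟩)))))
  simp only [map_mul, map_inv, map_commutatorElement] at this
  have h2 := congrArg (fun t => (kn p n) * t) this
  simpa [kn, kk, hh, PresentedGroup.of, mul_assoc] using h2.symm

lemma kn_comm_gen (g : GnGen p n) : Commute (kn p n) (PresentedGroup.of g) := by
  have := rel_one (p := p) (n := n)
    (Or.inr (Or.inr (Or.inr (Or.inr (Or.inr ⟨g, rfl⟩)))))
  simp only [map_commutatorElement] at this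
  exact (commutatorElement_eq_one_iff_commute).1 this

lemma kn_comm (x : Gn p n) : Commute (kn p n) x := by
  have hx : x ∈ Subgroup.closure (Set.range (PresentedGroup.of : GnGen p n → Gn p n)) := by
    rw [PresentedGroup.closure_range_of]; trivial
  induction hx using Subgroup.closure_induction with
  | mem g hg => obtain ⟨g, rfl⟩ := hg; exact kn_comm_gen g
  | one => exact Commute.one_right _
  | mul a b _ _ ha hb => exact ha.mul_right hb
  | inv a _ ha => exact ha.inv_right

lemma knpow_comm (m : ℕ) (x : Gn p n) : x * kn p n ^ m = kn p n ^ m * x :=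
  (((kn_comm x).pow_left m).eq).symm

/-- The key commutation: `k * h_s = h_s * k * kn`. -/
lemma kk_mul_hh (j : Fin (p ^ n)) (hj : (j : ℕ) = p ^ (n - 1)) :
    kk p n * hh p n j = hh p n j * kk p n * kn p n := by
  have h := kn_eq j hj
  rw [commutatorElement_def] at h
  have h1 : kk p n * hh p n j = kn p n * (hh p n j * kk p n) := by rw [h]; group
  rw [h1, (kn_comm (hh p n j * kk p n)).eq, mul_assoc]

lemma kk_mul_hhpow (j : Fin (p ^ n)) (m : ℕ) :
    kk p n * hh p n j ^ m =
      hh p n j ^ m * kk p n * kn p n ^ (if (j : ℕ) = p ^ (n - 1) then m else 0) := by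
  by_cases hj : (j : ℕ) = p ^ (n - 1)
  · rw [if_pos hj]
    induction m with
    | zero => simp
    | succ m ih =>
        rw [pow_succ, ← mul_assoc, ih, mul_assoc (hh p n j ^ m * kk p n),
          ← knpow_comm m (hh p n j), ← mul_assoc, mul_assoc (hh p n j ^ m), kk_mul_hh j hj]
        have h2 : kn p n * kn p n ^ m = kn p n ^ m * kn p n :=
          ((Commute.refl (kn p n)).pow_right m).eq
        rw [pow_succ (kn p n) m, ← h2]
        simp only [pow_succ, mul_assoc]
  · rw [if_neg hj, pow_zero, mul_one, ((kk_comm j hj).pow_right m).eq]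

/-! ### The map `φ` -/

variable (p n) in
def phifun (x : Multiplicative (Vn p n)) : Gn p n :=
  Finset.univ.noncommProd (fun j => hh p n j ^ (Multiplicative.toAdd x j).val)
    (hh_pow_pairwise _ _)

lemma phifun_mul [NeZero p] (x y : Multiplicative (Vn p n)) :
    phifun p n (x * y) = phifun p n x * phifun p n y := by
  unfold phifun
  rw [Finset.noncommProd_congr rfl
    (g := (fun j => hh p n j ^ (Multiplicative.toAdd x j).val) *
          (fun j => hh p n j ^ (Multiplicative.toAdd y j).val))
    (fun j _ => by
      show hh p n j ^ (Multiplicative.toAdd x j + Multiplicative.toAdd y j).val = _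
      exact pow_val_add (hh_pow j) _ _)]
  exact Finset.noncommProd_mul_distrib _ _
    (id (fun a _ b _ _ => (hh_comm a b).pow_pow _ _))
    (id (fun a _ b _ _ => (hh_comm a b).pow_pow _ _))
    (id (fun a _ b _ _ => (hh_comm a b).pow_pow _ _))

variable (p n) in
def phi [NeZero p] : Multiplicative (Vn p n) →* Gn p n :=
  MonoidHom.mk' (phifun p n) phifun_mul

lemma phifun_single [NeZero p] (j : Fin (p ^ n)) (z : ZMod p) :
    phifun p n (Multiplicative.ofAdd (Pi.single j z)) = hh p n j ^ z.val := by
  unfold phifun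
  rw [← Finset.mul_noncommProd_erase Finset.univ (Finset.mem_univ j) _
    (hh_pow_pairwise _ _)]
  refine Eq.trans (congrArg (HMul.hMul _) (Finset.noncommProd_eq_pow_card _ _ _ 1 (fun x hx => by
      rw [Finset.mem_erase] at hx
      simp [Pi.single_apply, if_neg hx.1]))) ?_
  simp

end Wilkes

namespace Wilkes

/-! ### Moving `kk`-powers past `phifun` -/

lemma kk_mul_prod (f : Fin (p ^ n) → ZMod p) (F : Finset (Fin (p ^ n))) :
    kk p n * F.noncommProd (fun j => hh p n j ^ (f j).val)
        (id (fun a _ b _ _ => (hh_comm a b).pow_pow _ _)) =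
      F.noncommProd (fun j => hh p n j ^ (f j).val)
        (id (fun a _ b _ _ => (hh_comm a b).pow_pow _ _)) * kk p n *
        kn p n ^ (∑ j ∈ F, if (j : ℕ) = p ^ (n - 1) then (f j).val else 0) := by
  induction F using Finset.cons_induction with
  | empty => simp
  | cons a F ha ih =>
      rw [Finset.noncommProd_cons, Finset.sum_cons, ← mul_assoc, kk_mul_hhpow,
        mul_assoc (hh p n a ^ (f a).val * kk p n), ← knpow_comm, ← mul_assoc,
        mul_assoc (hh p n a ^ (f a).val), ih, Nat.add_comm, pow_add]
      simp only [mul_assoc]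

lemma kk_mul_phifun (hsl : p ^ (n - 1) < p ^ n) (x : Multiplicative (Vn p n)) :
    kk p n * phifun p n x =
      phifun p n x * kk p n *
        kn p n ^ (Multiplicative.toAdd x ⟨p ^ (n - 1), hsl⟩).val := by
  have h := kk_mul_prod (fun j => Multiplicative.toAdd x j) Finset.univ
  have hiff : ∀ j : Fin (p ^ n), ((j : ℕ) = p ^ (n - 1)) ↔ j = ⟨p ^ (n - 1), hsl⟩ := by
    intro j
    constructor
    · intro hj; exact Fin.ext hj
    · intro hj; subst hj; rfl
  have hs : (∑ j : Fin (p ^ n), if (j : ℕ) = p ^ (n - 1)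
        then (Multiplicative.toAdd x j).val else 0) =
      (Multiplicative.toAdd x ⟨p ^ (n - 1), hsl⟩).val := by
    simp only [hiff]
    rw [Finset.sum_ite_eq' Finset.univ (⟨p ^ (n - 1), hsl⟩ : Fin (p ^ n))
      (fun j => (Multiplicative.toAdd x j).val)]
    simp
  rw [hs] at h
  exact h

lemma kkpow_mul_phifun (hsl : p ^ (n - 1) < p ^ n) (m : ℕ) (x : Multiplicative (Vn p n)) :
    kk p n ^ m * phifun p n x =
      phifun p n x * kk p n ^ m *
        kn p n ^ (m * (Multiplicative.toAdd x ⟨p ^ (n - 1), hsl⟩).val) := by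
  induction m with
  | zero => simp
  | succ m ih =>
      simp only [pow_succ']
      rw [mul_assoc, ih, ← mul_assoc, ← mul_assoc, kk_mul_phifun hsl,
        mul_assoc (phifun p n x * kk p n),
        ← knpow_comm (Multiplicative.toAdd x ⟨p ^ (n - 1), hsl⟩).val (kk p n ^ m),
        show (m + 1) * (Multiplicative.toAdd x ⟨p ^ (n - 1), hsl⟩).val =
          (Multiplicative.toAdd x ⟨p ^ (n - 1), hsl⟩).val +
            m * (Multiplicative.toAdd x ⟨p ^ (n - 1), hsl⟩).val by ring,
        pow_add]
      simp only [mul_assoc]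

end Wilkes

namespace Wilkes

/-! ### The normal-form homomorphism `psi : Kt → Gn` -/

lemma central_juggle {G : Type*} [Group G] (z1 z2 z3 B C E F : G)
    (h2 : ∀ x, Commute z2 x) (h3 : ∀ x, Commute z3 x)
    (hCE : C * E = E * C * z3) :
    z1 * B * C * (z2 * E * F) = z1 * z2 * z3 * (B * E) * (C * F) := by
  simp only [mul_assoc]
  rw [(h2 C).symm.left_comm, (h2 B).symm.left_comm]
  congr 1
  congr 1
  rw [← mul_assoc C E, hCE]
  simp only [mul_assoc]
  rw [(h3 C).symm.left_comm, (h3 E).symm.left_comm, (h3 B).symm.left_comm]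

variable (p n) in
def psifun (x : Kt p n) : Gn p n :=
  kn p n ^ x.c.val * phifun p n (Multiplicative.ofAdd x.v) * kk p n ^ x.a.val

lemma psifun_mul [NeZero p] (hsl : p ^ (n - 1) < p ^ n) (x y : Kt p n) :
    psifun p n (x * y) = psifun p n x * psifun p n y := by
  unfold psifun
  rw [Kt.mul_def]
  dsimp only
  rw [pow_val_add kn_pow, pow_val_add kn_pow, pow_val_mul kn_pow, pow_val_add kk_pow]
  have hlam : lam p n y.v = y.v ⟨p ^ (n - 1), hsl⟩ := dif_pos hsl
  have hofadd : Multiplicative.ofAdd (x.v + y.v) =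
      Multiplicative.ofAdd x.v * Multiplicative.ofAdd y.v := rfl
  rw [hofadd, phifun_mul]
  rw [central_juggle (kn p n ^ x.c.val) (kn p n ^ y.c.val)
    ((kn p n ^ (lam p n y.v).val) ^ x.a.val)
    (phifun p n (Multiplicative.ofAdd x.v)) (kk p n ^ x.a.val)
    (phifun p n (Multiplicative.ofAdd y.v)) (kk p n ^ y.a.val)
    (fun g => (kn_comm g).pow_left _)
    (fun g => ((kn_comm g).pow_left _).pow_left _)
    ?_]
  rw [kkpow_mul_phifun hsl x.a.val (Multiplicative.ofAdd y.v), hlam, mul_assoc, pow_mul']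
  rw [← mul_assoc]
  simp

end Wilkes

namespace Wilkes

/-! ### The homomorphism `psi` and its surjectivity -/

variable (p n) in
def psi [NeZero p] (hsl : p ^ (n - 1) < p ^ n) : Kt p n →* Gn p n :=
  MonoidHom.mk' (psifun p n) (psifun_mul hsl)

lemma phifun_one [NeZero p] : phifun p n 1 = 1 := by
  unfold phifun
  rw [Finset.noncommProd_eq_pow_card _ _ _ 1 (fun j _ => by simp), one_pow]

/-! ### The homomorphism `Phi : Gn → Kt` -/

variable (p n) in
def fK : GnGen p n → Kt p n
  | Sum.inl i => if i = 0 then ⟨0, 1, 0⟩ else ⟨0, 0, 1⟩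
  | Sum.inr j => ⟨Pi.single j 1, 0, 0⟩

lemma smul_p_zmod [NeZero p] (a : ZMod p) : p • a = 0 := by
  rw [nsmul_eq_mul, ZMod.natCast_self, zero_mul]

lemma smul_p_single [NeZero p] (j : Fin (p ^ n)) :
    p • (Pi.single j 1 : Vn p n) = 0 := by
  funext l
  rw [Pi.smul_apply, smul_p_zmod, Pi.zero_apply]

lemma fK_rels [NeZero p] : ∀ r ∈ GnRels p n, FreeGroup.lift (fK p n) r = 1 := by
  rintro r (⟨i, rfl⟩ | ⟨j, rfl⟩ | ⟨i, j, rfl⟩ | ⟨i, hi, rfl⟩ | ⟨j, hj, rfl⟩ | ⟨g, rfl⟩)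
  · rw [map_pow, FreeGroup.lift_apply_of]
    have hfk : fK p n (Sum.inl i) = (⟨0, 1, 0⟩ : Kt p n) ∨
        fK p n (Sum.inl i) = (⟨0, 0, 1⟩ : Kt p n) := by
      rcases Fin.exists_fin_two.mp ⟨i, rfl⟩ with h | h <;> subst h
      · left; simp [fK]
      · right; simp [fK]
    rcases hfk with h | h <;> rw [h] <;>
      rw [Kt.pow_def _ _ _ (Or.inr lam_zero), Kt.one_def] <;>
      (ext <;> simp [smul_p_zmod])
  · rw [map_pow, FreeGroup.lift_apply_of]
    show (⟨Pi.single j 1, 0, 0⟩ : Kt p n) ^ p = 1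
    rw [Kt.pow_def _ _ _ (Or.inl rfl), Kt.one_def]
    ext <;> simp [smul_p_single, smul_p_zmod]
  · rw [map_commutatorElement, FreeGroup.lift_apply_of, FreeGroup.lift_apply_of]
    refine commutatorElement_eq_one_iff_commute.mpr ?_
    show Commute (⟨Pi.single i 1, 0, 0⟩ : Kt p n) ⟨Pi.single j 1, 0, 0⟩
    unfold Commute SemiconjBy
    rw [Kt.mul_def, Kt.mul_def]
    ext <;> simp [add_comm]
  · rw [map_commutatorElement, FreeGroup.lift_apply_of, FreeGroup.lift_apply_of]
    refine commutatorElement_eq_one_iff_commute.mpr ?_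
    show Commute (fK p n (Sum.inl 0)) (⟨Pi.single i 1, 0, 0⟩ : Kt p n)
    simp only [fK, if_pos rfl]
    unfold Commute SemiconjBy
    rw [Kt.mul_def, Kt.mul_def]
    ext <;> simp [lam_single_ne i hi, lam_zero, add_comm]
  · rw [map_mul, map_inv, map_commutatorElement, FreeGroup.lift_apply_of, FreeGroup.lift_apply_of,
      FreeGroup.lift_apply_of]
    show (fK p n (Sum.inl 1))⁻¹ * ⁅fK p n (Sum.inl 0), (⟨Pi.single j 1, 0, 0⟩ : Kt p n)⁆ = 1
    simp only [fK, if_pos rfl, if_neg one_ne_zero]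
    rw [commutatorElement_def]
    simp only [Kt.mul_def, Kt.inv_def, Kt.one_def, lam_zero, lam_neg,
      lam_single_eq j hj, lam_add]
    ext <;> simp <;> ring
  · rw [map_commutatorElement, FreeGroup.lift_apply_of, FreeGroup.lift_apply_of]
    refine commutatorElement_eq_one_iff_commute.mpr ?_
    show Commute (fK p n (Sum.inl 1)) (fK p n g)
    simp only [fK, if_neg one_ne_zero]
    exact Kt.central _ _

variable (p n) in
def Phi [NeZero p] : Gn p n →* Kt p n :=
  PresentedGroup.toGroup fK_rels

end Wilkes

namespace Wilkes

lemma Phi_of [NeZero p] (g : GnGen p n) : Phi p n (PresentedGroup.of g) = fK p n g :=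
  PresentedGroup.toGroup.of fK_rels

variable (p n) in
def piK : Kt p n →* Multiplicative (Vn p n) :=
  MonoidHom.mk' (fun x => Multiplicative.ofAdd x.v) (fun x y => by rw [Kt.mul_def]; rfl)

lemma smul_val_single [NeZero p] (j : Fin (p ^ n)) (z : ZMod p) :
    (z.val • Pi.single j 1 : Vn p n) = Pi.single j z := by
  funext l
  rw [Pi.smul_apply]
  rcases eq_or_ne l j with h | h
  · subst h
    rw [Pi.single_eq_same, Pi.single_eq_same, nsmul_eq_mul, mul_one, ZMod.natCast_val,
      ZMod.cast_id]
  · rw [Pi.single_eq_of_ne h, Pi.single_eq_of_ne h, smul_zero]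

lemma theta_single [NeZero p] (j : Fin (p ^ n)) (z : ZMod p) :
    piK p n (Phi p n (phifun p n (Multiplicative.ofAdd (Pi.single j z)))) =
      Multiplicative.ofAdd (Pi.single j z) := by
  rw [phifun_single, map_pow,
    show Phi p n (hh p n j) = fK p n (Sum.inr j) from Phi_of _]
  show piK p n ((⟨Pi.single j 1, 0, 0⟩ : Kt p n) ^ z.val) = _
  rw [Kt.pow_def _ _ _ (Or.inl rfl)]
  show Multiplicative.ofAdd (z.val • Pi.single j 1 : Vn p n) = _
  rw [smul_val_single]

lemma piK_Phi_phi [NeZero p] (x : Multiplicative (Vn p n)) :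
    piK p n (Phi p n (phi p n x)) = x := by
  have hθ : piK p n (Phi p n (phi p n x)) =
      ((piK p n).comp ((Phi p n).comp (phi p n))) x := rfl
  have hx : x = Multiplicative.ofAdd (∑ j, Pi.single j (Multiplicative.toAdd x j)) := by
    have : (∑ j, Pi.single j (Multiplicative.toAdd x j)) = Multiplicative.toAdd x := by
      funext l
      rw [Finset.sum_apply]
      exact Fintype.sum_pi_single l (fun j => Multiplicative.toAdd x j)
    rw [this]
    rfl
  rw [hθ, hx, ofAdd_sum, map_prod]
  have : ∀ j : Fin (p ^ n),
      ((piK p n).comp ((Phi p n).comp (phi p n)))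
        (Multiplicative.ofAdd (Pi.single j (Multiplicative.toAdd x j))) =
      Multiplicative.ofAdd (Pi.single j (Multiplicative.toAdd x j)) := fun j =>
    theta_single j (Multiplicative.toAdd x j)
  rw [Finset.prod_congr rfl (fun j _ => this j), ← ofAdd_sum]

lemma psi_of [Fact p.Prime] (hsl : p ^ (n - 1) < p ^ n) (g : GnGen p n) :
    psi p n hsl (fK p n g) = PresentedGroup.of g := by
  haveI : NeZero p := ⟨(Fact.out : p.Prime).ne_zero⟩
  haveI : Fact (1 < p) := ⟨(Fact.out : p.Prime).one_lt⟩
  match g with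
  | Sum.inl i =>
      rcases Fin.exists_fin_two.mp ⟨i, rfl⟩ with h | h <;> subst h
      · show psifun p n (fK p n (Sum.inl 0)) = _
        have : fK p n (Sum.inl 0) = (⟨0, 1, 0⟩ : Kt p n) := by simp [fK]
        rw [this]
        show kn p n ^ (0 : ZMod p).val * phifun p n (Multiplicative.ofAdd 0) *
            kk p n ^ (1 : ZMod p).val = _
        rw [ZMod.val_zero, ZMod.val_one, ofAdd_zero, phifun_one, pow_zero, pow_one,
          one_mul, one_mul]
        rfl
      · show psifun p n (fK p n (Sum.inl 1)) = _
        have : fK p n (Sum.inl 1) = (⟨0, 0, 1⟩ : Kt p n) := by simp [fK]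
        rw [this]
        show kn p n ^ (1 : ZMod p).val * phifun p n (Multiplicative.ofAdd 0) *
            kk p n ^ (0 : ZMod p).val = _
        rw [ZMod.val_zero, ZMod.val_one, ofAdd_zero, phifun_one, pow_zero, pow_one,
          mul_one, mul_one]
        rfl
  | Sum.inr j =>
      show psifun p n (⟨Pi.single j 1, 0, 0⟩ : Kt p n) = _
      show kn p n ^ (0 : ZMod p).val * phifun p n (Multiplicative.ofAdd (Pi.single j 1)) *
          kk p n ^ (0 : ZMod p).val = _
      rw [ZMod.val_zero, pow_zero, pow_zero, one_mul, mul_one, phifun_single, ZMod.val_one,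
        pow_one]
      rfl

lemma psi_surj [Fact p.Prime] (hsl : p ^ (n - 1) < p ^ n) :
    Function.Surjective (psi p n hsl) := by
  haveI : NeZero p := ⟨(Fact.out : p.Prime).ne_zero⟩
  have hcomp : (psi p n hsl).comp (FreeGroup.lift (fK p n)) = PresentedGroup.mk (GnRels p n) :=
    FreeGroup.ext_hom _ _ (fun g => by
      simp only [MonoidHom.comp_apply, FreeGroup.lift_apply_of]
      exact psi_of hsl g)
  intro g
  induction g using PresentedGroup.induction_on with
  | _ w => exact ⟨FreeGroup.lift (fK p n) w, by rw [show psi p n hsl (FreeGroup.lift (fK p n) w)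
      = ((psi p n hsl).comp (FreeGroup.lift (fK p n))) w from rfl, hcomp]⟩

end Wilkes

open Wilkes in
/-- For a prime `p` and `n ≥ 2`, the group `G_n` is a finite `p`-group, and
the subgroup generated by `h_0, …, h_{p^n−1}` is elementary abelian of rank `p^n`: the
natural map `(ℤ/p)^{p^n} → G_n` sending the `j`-th basis vector to `h_j` is injective. -/
theorem stmt14 (p n : ℕ) (hp : p.Prime) (hn : 2 ≤ n) :
    Finite (Gn p n) ∧ IsPGroup p (Gn p n) ∧
    ∃ φ : Multiplicative (Fin (p ^ n) → ZMod p) →* Gn p n,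
      Function.Injective φ ∧
      ∀ j : Fin (p ^ n), φ (Multiplicative.ofAdd (Pi.single j 1)) =
        PresentedGroup.of (rels := GnRels p n) (Sum.inr j) := by
  haveI : Fact p.Prime := ⟨hp⟩
  haveI : NeZero p := ⟨hp.ne_zero⟩
  haveI : Fact (1 < p) := ⟨hp.one_lt⟩
  have hsl : p ^ (n - 1) < p ^ n := Nat.pow_lt_pow_right hp.one_lt (by omega)
  haveI : Finite (Kt p n) := Finite.of_equiv _ (ktEquiv p n).symm
  have hcard : Nat.card (Kt p n) = p ^ (p ^ n + 2) := by
    rw [Nat.card_congr (ktEquiv p n), Nat.card_prod, Nat.card_prod, Nat.card_zmod,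
      Nat.card_fun, Nat.card_zmod, Nat.card_eq_fintype_card, Fintype.card_fin]
    ring
  have hsurj := psi_surj (p := p) (n := n) hsl
  refine ⟨Finite.of_surjective _ hsurj, (IsPGroup.of_card hcard).of_surjective _ hsurj,
    phi p n, ?_, ?_⟩
  · intro a b hab
    have h2 : piK p n (Phi p n (phi p n a)) = piK p n (Phi p n (phi p n b)) := by rw [hab]
    rwa [piK_Phi_phi, piK_Phi_phi] at h2
  · intro j
    show phifun p n (Multiplicative.ofAdd (Pi.single j 1)) = _
    rw [phifun_single, ZMod.val_one, pow_one]
    rfl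
end

section
/- Fix a prime p and n ≥ 2, and let G_n be the group defined by the presentation ⟨k_{n−1}, k_n, h_0, …, h_{p^n−1} | k_i^p = h_j^p = 1; [h_i, h_j] = 1; [k_{n−1}, h_i] = 1 for i ≠ p^{n−1}; k_n = [k_{n−1}, h_{p^{n−1}}] central⟩. Let K_{n−1} = ⟨k_{n−1}⟩ × ⟨h_0, …, h_{p^{n−1}−1}⟩ inside G_n. Then the assignment k_n ↦ 1, h_j ↦ h_{j mod p^{n−1}} extends to a well-defined group homomorphism ρ_n : G_n → K_{n−1} which restricts to the identity on K_{n−1} (i.e., ρ_n is a retraction). -/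
open scoped commutatorElement

/-- The subgroup `K_{n-1} = ⟨k_{n-1}⟩ × ⟨h_0, …, h_{p^{n-1}-1}⟩` of `G_n`. -/
def Kn (p n : ℕ) : Subgroup (Gn p n) :=
  Subgroup.closure ({PresentedGroup.of (rels := GnRels p n) (Sum.inl 0)} ∪
    {x | ∃ j : Fin (p ^ n), (j : ℕ) < p ^ (n - 1) ∧
      x = PresentedGroup.of (rels := GnRels p n) (Sum.inr j)})

section Aux

variable {α : Type*} {rels : Set (FreeGroup α)}

lemma mk_rel_one {r : FreeGroup α} (hr : r ∈ rels) :
    PresentedGroup.mk rels r = 1 := by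
  have : r ∈ Subgroup.normalClosure rels := Subgroup.subset_normalClosure hr
  exact (QuotientGroup.eq_one_iff r).mpr this

end Aux

/-- For a prime `p` and `n ≥ 2`, the assignment `k_n ↦ 1`,
`h_j ↦ h_{j mod p^{n−1}}` (and `k_{n-1} ↦ k_{n-1}`) extends to a well-defined group
homomorphism `ρ_n : G_n → K_{n−1}` restricting to the identity on `K_{n−1}`
(i.e. `ρ_n` is a retraction of `G_n` onto `K_{n-1}`). -/

theorem stmt15 (p n : ℕ) (hp : p.Prime) (hn : 2 ≤ n) :
    ∃ ρ : Gn p n →* Gn p n,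
      ρ (PresentedGroup.of (rels := GnRels p n) (Sum.inl 1)) = 1 ∧
      ρ (PresentedGroup.of (rels := GnRels p n) (Sum.inl 0)) =
        PresentedGroup.of (rels := GnRels p n) (Sum.inl 0) ∧
      (∀ j j' : Fin (p ^ n), (j' : ℕ) = (j : ℕ) % p ^ (n - 1) →
        ρ (PresentedGroup.of (rels := GnRels p n) (Sum.inr j)) =
          PresentedGroup.of (rels := GnRels p n) (Sum.inr j')) ∧
      ρ.range ≤ Kn p n ∧ (∀ x ∈ Kn p n, ρ x = x) := by
  have hm0 : 0 < p ^ (n - 1) := pow_pos hp.pos _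
  have hmn : p ^ (n - 1) ≤ p ^ n := Nat.pow_le_pow_right hp.pos (Nat.sub_le n 1)
  have hlt : ∀ j : Fin (p ^ n), (j : ℕ) % p ^ (n - 1) < p ^ n :=
    fun j => lt_of_lt_of_le (Nat.mod_lt _ hm0) hmn
  -- the map on generators
  set f : GnGen p n → Gn p n := fun g =>
    match g with
    | Sum.inl i => if i = 0 then PresentedGroup.of (rels := GnRels p n) (Sum.inl 0) else 1
    | Sum.inr j => PresentedGroup.of (rels := GnRels p n)
        (Sum.inr ⟨(j : ℕ) % p ^ (n - 1), hlt j⟩) with hf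
  -- basic relations holding in Gn
  have relpow0 : ∀ i : Fin 2,
      (PresentedGroup.of (rels := GnRels p n) (Sum.inl i)) ^ p = 1 := by
    intro i
    have := mk_rel_one (rels := GnRels p n)
      (Or.inl ⟨i, rfl⟩ : (FreeGroup.of (Sum.inl i : GnGen p n)) ^ p ∈ GnRels p n)
    rwa [map_pow] at this
  have relpowh : ∀ j : Fin (p ^ n),
      (PresentedGroup.of (rels := GnRels p n) (Sum.inr j)) ^ p = 1 := by
    intro j
    have := mk_rel_one (rels := GnRels p n)
      (Or.inr (Or.inl ⟨j, rfl⟩) :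
        (FreeGroup.of (Sum.inr j : GnGen p n)) ^ p ∈ GnRels p n)
    rwa [map_pow] at this
  have relcommhh : ∀ i j : Fin (p ^ n),
      ⁅(PresentedGroup.of (rels := GnRels p n) (Sum.inr i)),
        PresentedGroup.of (rels := GnRels p n) (Sum.inr j)⁆ = 1 := by
    intro i j
    have := mk_rel_one (rels := GnRels p n)
      (Or.inr (Or.inr (Or.inl ⟨i, j, rfl⟩)) :
        ⁅FreeGroup.of (Sum.inr i : GnGen p n), FreeGroup.of (Sum.inr j)⁆ ∈ GnRels p n)
    rwa [map_commutatorElement] at this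
  have relcommk : ∀ i : Fin (p ^ n), (i : ℕ) ≠ p ^ (n - 1) →
      ⁅(PresentedGroup.of (rels := GnRels p n) (Sum.inl 0)),
        PresentedGroup.of (rels := GnRels p n) (Sum.inr i)⁆ = 1 := by
    intro i hi
    have := mk_rel_one (rels := GnRels p n)
      (Or.inr (Or.inr (Or.inr (Or.inl ⟨i, hi, rfl⟩))) :
        ⁅FreeGroup.of (Sum.inl 0 : GnGen p n), FreeGroup.of (Sum.inr i)⁆ ∈ GnRels p n)
    rwa [map_commutatorElement] at this
  -- the relations are satisfied by f
  have hrels : ∀ r ∈ GnRels p n, FreeGroup.lift f r = 1 := by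
    rintro r (⟨i, rfl⟩ | ⟨j, rfl⟩ | ⟨i, j, rfl⟩ | ⟨i, hi, rfl⟩ | ⟨j, hj, rfl⟩ | ⟨g, rfl⟩)
    · rw [map_pow, FreeGroup.lift_apply_of]
      rcases eq_or_ne i 0 with h | h
      · simp only [hf, h, if_pos rfl]
        exact relpow0 0
      · simp [hf, h]
    · rw [map_pow, FreeGroup.lift_apply_of]
      exact relpowh _
    · rw [map_commutatorElement, FreeGroup.lift_apply_of, FreeGroup.lift_apply_of]
      exact relcommhh _ _
    · rw [map_commutatorElement, FreeGroup.lift_apply_of, FreeGroup.lift_apply_of]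
      simp only [hf, if_pos rfl]
      exact relcommk _ (Nat.ne_of_lt (Nat.mod_lt _ hm0))
    · rw [map_mul, map_inv, map_commutatorElement, FreeGroup.lift_apply_of, FreeGroup.lift_apply_of,
        FreeGroup.lift_apply_of]
      have h1 : f (Sum.inl 1) = 1 := by simp [hf]
      rw [h1]
      simp only [hf, if_pos rfl, inv_one, one_mul]
      exact relcommk _ (by simp [hj, Nat.mod_self]; exact (Nat.ne_of_lt hm0).symm ∘ Eq.symm)
    · rw [map_commutatorElement, FreeGroup.lift_apply_of, FreeGroup.lift_apply_of]
      have h1 : f (Sum.inl 1) = 1 := by simp [hf]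
      rw [h1]
      simp
  refine ⟨PresentedGroup.toGroup hrels, ?_, ?_, ?_, ?_, ?_⟩
  · rw [PresentedGroup.toGroup.of]
    simp [hf]
  · rw [PresentedGroup.toGroup.of]
    simp [hf]
  · intro j j' hjj'
    rw [PresentedGroup.toGroup.of]
    simp only [hf]
    congr 1
    exact congrArg Sum.inr (Fin.ext hjj'.symm)
  · rintro x ⟨y, rfl⟩
    have hy : y ∈ Subgroup.closure
        (Set.range (PresentedGroup.of : GnGen p n → Gn p n)) := by
      rw [PresentedGroup.closure_range_of]; trivial
    refine Subgroup.closure_induction (fun z hz => ?_) (one_mem _) (fun a b _ _ ha hb => by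
      rw [map_mul]; exact mul_mem ha hb) (fun a _ ha => by rw [map_inv]; exact inv_mem ha) hy
    · obtain ⟨g, rfl⟩ := hz
      rw [PresentedGroup.toGroup.of]
      rcases g with i | j
      · rcases eq_or_ne i 0 with h | h
        · simp only [hf, h, if_pos rfl]
          exact Subgroup.subset_closure (Or.inl rfl)
        · simp only [hf, if_neg h]
          exact one_mem _
      · exact Subgroup.subset_closure (Or.inr ⟨_, Nat.mod_lt _ hm0, rfl⟩)
  · intro x hx
    refine Subgroup.closure_induction (fun z hz => ?_) (by simp) (fun a b _ _ ha hb => by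
      rw [map_mul, ha, hb]) (fun a _ ha => by rw [map_inv, ha]) hx
    rcases hz with h | ⟨j, hj, rfl⟩
    · rw [Set.mem_singleton_iff] at h
      subst h
      rw [PresentedGroup.toGroup.of]
      simp [hf]
    · rw [PresentedGroup.toGroup.of]
      simp only [hf]
      congr 2
      exact Fin.ext (Nat.mod_eq_of_lt hj)
end
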